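/- arXiv:2009.04873 — 7 statements merged into one kernel-verified Lean document; each statement's English description precedes it below -/
import Mathlib

section
/- Fix a 3-dimensional subspace W ⊆ V on which (·,·) is positive definite, let π_W : V → W be the orthogonal projection (well-defined since V = W ⊕ W^⊥), and let det_W be a nonzero alternating trilinear form on W. Then for every (α, β + ix) ∈ 𝒢 one has det_W(π_W(Re α), π_W(Im α), π_W(x)) ≠ 0. -/
/- Context: `V` is a finite-dimensional real vector space with a nondegenerate symmetric
bilinear form `B` of signature `(3, dim V − 3)`.  We model the complexification `V_ℂ`
by pairs `(a, b) : V × V` representing `a + i·b`. -/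

noncomputable section

/-- The ℂ-bilinear extension of `B` to `V × V`, where `(a, b)` represents `a + i·b`. -/
def Bc {V : Type*} [AddCommGroup V] [Module ℝ V] (B : LinearMap.BilinForm ℝ V)
    (y z : V × V) : ℂ :=
  ⟨B y.1 z.1 - B y.2 z.2, B y.1 z.2 + B y.2 z.1⟩

/-- The inclusion of `V` into its complexification `V × V`. -/
def toC {V : Type*} [AddCommGroup V] (z : V) : V × V := (z, 0)

/-- Complex conjugation on the complexification `V × V`. -/
def conjC {V : Type*} [AddCommGroup V] (y : V × V) : V × V := (y.1, -y.2)

/-- Scalar multiplication by a complex number on the complexification `V × V`. -/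
def cSMul {V : Type*} [AddCommGroup V] [Module ℝ V] (s : ℂ) (y : V × V) : V × V :=
  (s.re • y.1 - s.im • y.2, s.im • y.1 + s.re • y.2)

/-- The (symmetric, nondegenerate) form `B` has signature `(3, dim V − 3)`: `V` splits as an
orthogonal direct sum of a 3-dimensional positive definite subspace and a negative definite
complement. -/
def IsSigThree {V : Type*} [AddCommGroup V] [Module ℝ V] (B : LinearMap.BilinForm ℝ V) : Prop :=
  ∃ P N : Submodule ℝ V, IsCompl P N ∧ Module.finrank ℝ P = 3 ∧
    (∀ x ∈ P, ∀ y ∈ N, B x y = 0) ∧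
    (∀ x ∈ P, x ≠ 0 → 0 < B x x) ∧ (∀ y ∈ N, y ≠ 0 → B y y < 0)

/-- The period domain `𝒢`: pairs `(α, β + i·x)` with `α² = 0`, `α·ᾱ > 0`, `α·x = 0`, `x² > 0`.
A point is `p = (α, (β, x))` where `α : V × V` is a complexified vector and `β, x ∈ V`. -/
def periodDomain {V : Type*} [AddCommGroup V] [Module ℝ V] (B : LinearMap.BilinForm ℝ V) :
    Set ((V × V) × (V × V)) :=
  {p | Bc B p.1 p.1 = 0 ∧ 0 < (Bc B p.1 (conjC p.1)).re ∧
       Bc B p.1 (toC p.2.2) = 0 ∧ 0 < B p.2.2 p.2.2}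

/-- Fix a 3-dimensional subspace `W ⊆ V` on which the form is positive
definite, the orthogonal projection `π : V → W` (identity on `W`, zero on `W^⊥`), and a
nonzero alternating trilinear form `det_W` on `W`.  Then for every `(α, β + ix) ∈ 𝒢` one has
`det_W(π(Re α), π(Im α), π(x)) ≠ 0`. -/
theorem statement2 {V : Type*} [NormedAddCommGroup V] [NormedSpace ℝ V] [FiniteDimensional ℝ V]
    (B : LinearMap.BilinForm ℝ V)
    (hsymm : ∀ x y : V, B x y = B y x)
    (hnd : ∀ x : V, (∀ y : V, B x y = 0) → x = 0)
    (hsig : IsSigThree B)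
    (W : Submodule ℝ V) (hW3 : Module.finrank ℝ W = 3)
    (hWpos : ∀ w ∈ W, w ≠ 0 → 0 < B w w)
    (π : V →ₗ[ℝ] W) (hπ1 : ∀ w : W, π (w : V) = w) (hπ2 : ∀ u ∈ B.orthogonal W, π u = 0)
    (detW : W [⋀^Fin 3]→ₗ[ℝ] ℝ) (hdetW : detW ≠ 0)
    (p : (V × V) × (V × V)) (hp : p ∈ periodDomain B) :
    detW ![π p.1.1, π p.1.2, π p.2.2] ≠ 0 := by
  obtain ⟨h1, h2, h3, h4⟩ := hp
  set a := p.1.1 with ha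
  set b := p.1.2 with hb
  set x := p.2.2 with hx
  -- scalar relations
  have e1 : B a a - B b b = 0 := congrArg Complex.re h1
  have e2 : B a b + B b a = 0 := congrArg Complex.im h1
  have hab : B a b = 0 := by have := hsymm a b; linarith
  have h2' : 0 < B a a - B b (-b) := h2
  have haa : 0 < B a a := by
    rw [map_neg] at h2'; linarith
  have hbb : 0 < B b b := by rw [map_neg] at h2'; linarith
  have hax : B a x = 0 := by
    have := congrArg Complex.re h3
    simpa [Bc, toC] using this
  have hbx : B b x = 0 := by
    have := congrArg Complex.im h3
    simpa [Bc, toC] using this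
  -- complementarity of W and its orthogonal
  have hrefl : B.IsRefl := fun u v h => by rw [hsymm]; exact h
  have hres : (B.restrict W).Nondegenerate := by
    refine (LinearMap.IsRefl.nondegenerate_iff_separatingLeft (B := B.restrict W) (fun u v h => hrefl u v h)).2 ?_
    rintro ⟨w, hw⟩ h
    have hw0 : B w w = 0 := h ⟨w, hw⟩
    have : w = 0 := by
      by_contra hne
      exact absurd hw0 (ne_of_gt (hWpos w hw hne))
    exact Subtype.ext this
  have hcompl : IsCompl W (B.orthogonal W) :=
    LinearMap.BilinForm.isCompl_orthogonal_of_restrict_nondegenerate hrefl hres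
  -- ker of π is the orthogonal complement
  have hker : ∀ v : V, π v = 0 → v ∈ B.orthogonal W := by
    intro v hv
    have hv' : v ∈ W ⊔ B.orthogonal W := by
      rw [hcompl.sup_eq_top]; exact Submodule.mem_top
    obtain ⟨y, hy, z, hz, rfl⟩ := Submodule.mem_sup.1 hv'
    have : π (y + z) = ⟨y, hy⟩ := by
      rw [map_add, hπ2 z hz, add_zero]
      exact hπ1 ⟨y, hy⟩
    rw [hv] at this
    have hy0 : y = 0 := by
      have := congrArg (Subtype.val) this.symm
      simpa using this
    rw [hy0, zero_add]; exact hz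
  -- no positive vectors in the orthogonal complement
  have hneg : ∀ v ∈ B.orthogonal W, 0 < B v v → False := by
    intro v hv hvpos
    have hvne : v ≠ 0 := by
      rintro rfl; simp at hvpos
    set S := W ⊔ (ℝ ∙ v) with hS
    -- positive definiteness on S
    have hSpos : ∀ z ∈ S, z ≠ 0 → 0 < B z z := by
      intro z hz hzne
      obtain ⟨w, hw, z', hz', rfl⟩ := Submodule.mem_sup.1 hz
      obtain ⟨c, rfl⟩ := Submodule.mem_span_singleton.1 hz'
      have hwv : B w v = 0 := hv w hw
      have hvw : B v w = 0 := by rw [hsymm]; exact hwv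
      have hexp : B (w + c • v) (w + c • v) = B w w + c * c * B v v := by
        simp [map_add, map_smul, smul_eq_mul, hwv, hvw]
        ring
      rw [hexp]
      have hww : 0 ≤ B w w := by
        rcases eq_or_ne w 0 with rfl | hwne
        · simp
        · exact le_of_lt (hWpos w hw hwne)
      rcases eq_or_ne c 0 with rfl | hcne
      · have hwne : w ≠ 0 := by simpa using hzne
        have := hWpos w hw hwne
        simpa using this
      · have hc2 : 0 < c * c := mul_self_pos.2 hcne
        have := mul_pos hc2 hvpos
        linarith
    -- dimension of S is 4
    have hdisj : W ⊓ (ℝ ∙ v) = ⊥ := by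
      rw [eq_bot_iff]
      intro z hz
      obtain ⟨hz1, hz2⟩ := Submodule.mem_inf.1 hz
      have hz3 : z ∈ B.orthogonal W := Submodule.span_le.2 (by simpa using hv) hz2
      have := hcompl.disjoint
      exact (Submodule.disjoint_def.1 this) z hz1 hz3
    have hdimS : Module.finrank ℝ S = 4 := by
      have h := Submodule.finrank_sup_add_finrank_inf_eq W (ℝ ∙ v)
      rw [hdisj, finrank_span_singleton hvne, hW3] at h
      simpa using h
    -- signature contradiction
    obtain ⟨P, N, hPN, hP3, horth, hPpos, hNneg⟩ := hsig
    have hPNdim : Module.finrank ℝ P + Module.finrank ℝ N = Module.finrank ℝ V :=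
      Submodule.finrank_add_eq_of_isCompl hPN
    have hSN : S ⊓ N = ⊥ := by
      rw [eq_bot_iff]
      intro z hz
      obtain ⟨hz1, hz2⟩ := Submodule.mem_inf.1 hz
      by_contra hzne
      have hzne' : z ≠ 0 := by simpa [Submodule.mem_bot] using hzne
      have := hSpos z hz1 hzne'
      have := hNneg z hz2 hzne'
      linarith
    have h5 := Submodule.finrank_sup_add_finrank_inf_eq S N
    rw [hSN, hdimS] at h5
    have h6 : Module.finrank ℝ ↥(S ⊔ N) ≤ Module.finrank ℝ V := Submodule.finrank_le _
    have h7 : Module.finrank ℝ P ≤ Module.finrank ℝ V := Submodule.finrank_le _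
    simp only [finrank_bot, add_zero] at h5
    omega
  -- linear independence of the projections
  have hli : LinearIndependent ℝ ![π a, π b, π x] := by
    rw [Fintype.linearIndependent_iff]
    intro g hg
    have hsum : g 0 • π a + g 1 • π b + g 2 • π x = 0 := by
      have := hg
      rwa [Fin.sum_univ_three] at this
    set v := g 0 • a + g 1 • b + g 2 • x with hv
    have hπv : π v = 0 := by
      rw [hv, map_add, map_add, map_smul, map_smul, map_smul]
      exact hsum
    have hvorth : v ∈ B.orthogonal W := hker v hπv
    have hBvv : B v v = g 0 * g 0 * B a a + g 1 * g 1 * B b b + g 2 * g 2 * B x x := by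
      have hba : B b a = 0 := by rw [hsymm]; exact hab
      have hxa : B x a = 0 := by rw [hsymm]; exact hax
      have hxb : B x b = 0 := by rw [hsymm]; exact hbx
      simp [hv, map_add, map_smul, smul_eq_mul, hab, hba, hax, hxa, hbx, hxb]
      ring
    have hg0 : ∀ i, g i = 0 := by
      by_contra hgg
      push_neg at hgg
      obtain ⟨i, hi⟩ := hgg
      have hpos : 0 < B v v := by
        rw [hBvv]
        have h0 : 0 ≤ g 0 * g 0 * B a a := mul_nonneg (mul_self_nonneg _) haa.le
        have hh1 : 0 ≤ g 1 * g 1 * B b b := mul_nonneg (mul_self_nonneg _) hbb.le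
        have hh2 : 0 ≤ g 2 * g 2 * B x x := mul_nonneg (mul_self_nonneg _) h4.le
        fin_cases i
        · have : 0 < g 0 * g 0 * B a a := mul_pos (mul_self_pos.2 hi) haa
          linarith
        · have : 0 < g 1 * g 1 * B b b := mul_pos (mul_self_pos.2 hi) hbb
          linarith
        · have : 0 < g 2 * g 2 * B x x := mul_pos (mul_self_pos.2 hi) h4
          linarith
      exact hneg v hvorth hpos
    exact hg0
  -- conclude with the alternating form
  have hcard : Fintype.card (Fin 3) = Module.finrank ℝ W := by simp [hW3]
  let bW := basisOfLinearIndependentOfCardEqFinrank hli hcard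
  have hbW : ⇑bW = ![π a, π b, π x] := coe_basisOfLinearIndependentOfCardEqFinrank hli hcard
  intro hdet0
  apply hdetW
  have heq := detW.eq_smul_basis_det bW
  rw [heq]
  have : detW ⇑bW = 0 := by rw [hbW]; exact hdet0
  rw [this, zero_smul]
end
end

section
/- The period domain 𝒢 is nonempty and has at least two connected components. More precisely, for every (α, β + ix) ∈ 𝒢 the point (α, −β − ix) also lies in 𝒢, and (α, β + ix) and (α, −β − ix) lie in distinct connected components of 𝒢. -/
/- Context: `V` is a finite-dimensional real vector space with a nondegenerate symmetric
bilinear form `B` of signature `(3, dim V − 3)`.  We model the complexification `V_ℂ`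
by pairs `(a, b) : V × V` representing `a + i·b`. -/

noncomputable section

lemma Bc_eq_zero {V : Type*} [AddCommGroup V] [Module ℝ V] (B : LinearMap.BilinForm ℝ V)
    (y z : V × V) : Bc B y z = 0 ↔ B y.1 z.1 - B y.2 z.2 = 0 ∧ B y.1 z.2 + B y.2 z.1 = 0 := by
  rw [Complex.ext_iff]; exact Iff.rfl.and (by simp [Bc])

lemma pd_data {V : Type*} [AddCommGroup V] [Module ℝ V] (B : LinearMap.BilinForm ℝ V)
    (hsymm : ∀ x y : V, B x y = B y x) {p : (V × V) × (V × V)} (hp : p ∈ periodDomain B) :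
    0 < B p.1.1 p.1.1 ∧ 0 < B p.1.2 p.1.2 ∧ B p.1.1 p.1.2 = 0 ∧
    B p.1.1 p.2.2 = 0 ∧ B p.1.2 p.2.2 = 0 ∧ 0 < B p.2.2 p.2.2 := by
  obtain ⟨h1, h2, h3, h4⟩ := hp
  rw [Bc_eq_zero] at h1 h3
  obtain ⟨h1a, h1b⟩ := h1
  obtain ⟨h3a, h3b⟩ := h3
  have hre : (Bc B p.1 (conjC p.1)).re = B p.1.1 p.1.1 + B p.1.2 p.1.2 := by
    show B p.1.1 p.1.1 - B p.1.2 (-p.1.2) = _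
    rw [map_neg]; ring
  rw [hre] at h2
  have hab : B p.1.1 p.1.2 = 0 := by
    have := hsymm p.1.2 p.1.1; linarith
  refine ⟨by linarith, by linarith, hab, ?_, ?_, h4⟩
  · have : B p.1.2 (0 : V) = 0 := map_zero _
    simpa [toC, this] using h3a
  · have : B p.1.1 (0 : V) = 0 := map_zero _
    simpa [toC, this] using h3b


lemma expand_Bww {V : Type*} [AddCommGroup V] [Module ℝ V] (B : LinearMap.BilinForm ℝ V)
    (a b x : V) (g0 g1 g2 : ℝ) (hab : B a b = 0) (hba : B b a = 0) (hax : B a x = 0)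
    (hxa : B x a = 0) (hbx : B b x = 0) (hxb : B x b = 0) :
    B (g0 • a + g1 • b + g2 • x) (g0 • a + g1 • b + g2 • x)
      = g0 ^ 2 * B a a + g1 ^ 2 * B b b + g2 ^ 2 * B x x := by
  simp only [map_add, map_smul, LinearMap.add_apply, LinearMap.smul_apply, smul_eq_mul,
    hab, hba, hax, hxa, hbx, hxb]
  ring

lemma gzero_of_nonpos {u v w g0 g1 g2 : ℝ} (hu : 0 < u) (hv : 0 < v) (hw : 0 < w)
    (h : g0 ^ 2 * u + g1 ^ 2 * v + g2 ^ 2 * w ≤ 0) : g0 = 0 ∧ g1 = 0 ∧ g2 = 0 := by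
  refine ⟨?_, ?_, ?_⟩ <;>
  · rw [← pow_eq_zero_iff (n := 2) (two_ne_zero)]
    nlinarith [sq_nonneg g0, sq_nonneg g1, sq_nonneg g2]

set_option maxHeartbeats 1000000 in
/-- The period domain `𝒢` is nonempty and has at least two connected
components: for every `(α, β + ix) ∈ 𝒢`, the point `(α, −β − ix)` also lies in `𝒢`, and the
two points lie in distinct connected components of `𝒢`. -/
theorem statement3 {V : Type*} [NormedAddCommGroup V] [NormedSpace ℝ V] [FiniteDimensional ℝ V]
    (B : LinearMap.BilinForm ℝ V)
    (hsymm : ∀ x y : V, B x y = B y x)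
    (hnd : ∀ x : V, (∀ y : V, B x y = 0) → x = 0)
    (hsig : IsSigThree B) :
    (periodDomain B).Nonempty ∧
    ∀ p ∈ periodDomain B,
      (p.1, (-p.2.1, -p.2.2)) ∈ periodDomain B ∧
      connectedComponentIn (periodDomain B) p ≠
        connectedComponentIn (periodDomain B) (p.1, (-p.2.1, -p.2.2)) := by
  classical
  obtain ⟨P, N, hPN, hrank, horthPN, hpos, hneg⟩ := hsig
  -- ## Nonemptiness
  have hBsymm : (B.restrict P).IsSymm := by
    refine ⟨fun x y => ?_⟩
    simp only [LinearMap.BilinForm.restrict_apply, RingHom.id_apply]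
    exact hsymm _ _
  obtain ⟨v0, hv0⟩ := LinearMap.BilinForm.exists_orthogonal_basis (LinearMap.BilinForm.isSymm_iff.1 hBsymm)
  set v : Module.Basis (Fin 3) ℝ P := v0.reindex (finCongr hrank) with hv
  have hvo : ∀ i j : Fin 3, i ≠ j → B ((v i : V)) ((v j : V)) = 0 := by
    intro i j hij
    have := hv0 (show (finCongr hrank).symm i ≠ (finCongr hrank).symm j from
      fun h => hij (by simpa using congrArg (finCongr hrank) h))
    simpa [hv, Module.Basis.reindex_apply, LinearMap.BilinForm.restrict_apply] using this
  have hvpos : ∀ i : Fin 3, 0 < B ((v i : V)) ((v i : V)) := by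
    intro i
    refine hpos _ (v i).2 ?_
    simpa [Submodule.coe_eq_zero] using v.ne_zero i
  set e : Fin 3 → V := fun i => (v i : V) with he
  set c0 : ℝ := Real.sqrt (B (e 1) (e 1)) with hc0
  set c1 : ℝ := Real.sqrt (B (e 0) (e 0)) with hc1
  have hc0sq : c0 ^ 2 = B (e 1) (e 1) := Real.sq_sqrt (hvpos 1).le
  have hc1sq : c1 ^ 2 = B (e 0) (e 0) := Real.sq_sqrt (hvpos 0).le
  have hc0pos : 0 < c0 := Real.sqrt_pos.mpr (hvpos 1)
  have hc1pos : 0 < c1 := Real.sqrt_pos.mpr (hvpos 0)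
  have hq : (((c0 • e 0, c1 • e 1), ((0 : V), e 2)) : (V × V) × (V × V)) ∈ periodDomain B := by
    refine ⟨?_, ?_, ?_, hvpos 2⟩
    · rw [Bc_eq_zero]
      constructor
      · show B (c0 • e 0) (c0 • e 0) - B (c1 • e 1) (c1 • e 1) = 0
        simp only [map_smul, LinearMap.smul_apply, smul_eq_mul]
        nlinarith [hc0sq, hc1sq]
      · show B (c0 • e 0) (c1 • e 1) + B (c1 • e 1) (c0 • e 0) = 0
        simp only [map_smul, LinearMap.smul_apply, smul_eq_mul]
        rw [hvo 0 1 (by decide), hvo 1 0 (by decide)]; ring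
    · show (0:ℝ) < B (c0 • e 0) (c0 • e 0) - B (c1 • e 1) (-(c1 • e 1))
      rw [map_neg]
      simp only [map_smul, LinearMap.smul_apply, smul_eq_mul]
      nlinarith [hvpos 0, hvpos 1, hc0sq, hc1sq]
    · rw [Bc_eq_zero]
      constructor
      · show B (c0 • e 0) (e 2) - B (c1 • e 1) (0 : V) = 0
        rw [map_zero]
        simp only [map_smul, LinearMap.smul_apply, smul_eq_mul]
        rw [hvo 0 2 (by decide)]; ring
      · show B (c0 • e 0) (0 : V) + B (c1 • e 1) (e 2) = 0
        rw [map_zero]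
        simp only [map_smul, LinearMap.smul_apply, smul_eq_mul]
        rw [hvo 1 2 (by decide)]; ring
  -- ## The orientation invariant
  set π : V →ₗ[ℝ] P := P.linearProjOfIsCompl N hPN with hπ
  set F : ((V × V) × (V × V)) → ℝ := fun p => v.det ![π p.1.1, π p.1.2, π p.2.2] with hF
  have hFcont : Continuous F := by
    have heq : F = fun p =>
        Matrix.det (Matrix.of fun i j : Fin 3 => (v.coord i) (![π p.1.1, π p.1.2, π p.2.2] j)) := by
      funext p
      show v.det ![π p.1.1, π p.1.2, π p.2.2] = _
      rw [Module.Basis.det_apply]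
      rfl
    rw [heq]
    apply Continuous.matrix_det
    apply continuous_matrix
    intro i j
    fin_cases j
    · simp only [Matrix.cons_val_zero]
      exact (LinearMap.continuous_of_finiteDimensional ((v.coord i).comp π)).comp
        (continuous_fst.comp continuous_fst)
    · simp only [Matrix.cons_val_one, Matrix.head_cons]
      exact (LinearMap.continuous_of_finiteDimensional ((v.coord i).comp π)).comp
        (continuous_snd.comp continuous_fst)
    · simp only [Matrix.cons_val_two, Matrix.tail_cons, Matrix.head_cons]
      exact (LinearMap.continuous_of_finiteDimensional ((v.coord i).comp π)).comp
        (continuous_snd.comp continuous_snd)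
  have hFne : ∀ q ∈ periodDomain B, F q ≠ 0 := by
    intro q hq
    obtain ⟨haa, hbb, hab, hax, hbx, hxx⟩ := pd_data B hsymm hq
    set a := q.1.1; set b := q.1.2; set x := q.2.2
    have hli : LinearIndependent ℝ ![π a, π b, π x] := by
      rw [Fintype.linearIndependent_iff]
      intro g hg
      set w : V := g 0 • a + g 1 • b + g 2 • x with hwdef
      have hπw : π w = 0 := by
        have hsum : ∑ i, g i • ![π a, π b, π x] i = π w := by
          simp [Fin.sum_univ_three, hwdef, map_add, map_smul]
        rw [hsum] at hg; exact hg
      have hwN : w ∈ N := (Submodule.linearProjOfIsCompl_apply_eq_zero_iff hPN).1 hπw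
      have hBww : B w w ≤ 0 := by
        rcases eq_or_ne w 0 with h | h
        · simp [h]
        · exact (hneg w hwN h).le
      have hexp : B w w = g 0 ^ 2 * B a a + g 1 ^ 2 * B b b + g 2 ^ 2 * B x x :=
        expand_Bww B a b x (g 0) (g 1) (g 2) hab ((hsymm b a).trans hab)
          hax ((hsymm x a).trans hax) hbx ((hsymm x b).trans hbx)
      rw [hexp] at hBww
      obtain ⟨h0, h1, h2⟩ := gzero_of_nonpos haa hbb hxx hBww
      intro i
      fin_cases i <;> assumption
    have hspan : Submodule.span ℝ (Set.range ![π a, π b, π x]) = ⊤ :=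
      hli.span_eq_top_of_card_eq_finrank (by simp [hrank])
    exact ((Module.Basis.is_basis_iff_det v).1 ⟨hli, hspan⟩).ne_zero
  have hFneg : ∀ p : (V × V) × (V × V), F (p.1, (-p.2.1, -p.2.2)) = -F p := by
    intro p
    show v.det ![π p.1.1, π p.1.2, π (-p.2.2)] = -v.det ![π p.1.1, π p.1.2, π p.2.2]
    have h1 : ![π p.1.1, π p.1.2, π (-p.2.2)]
        = Function.update ![π p.1.1, π p.1.2, π p.2.2] 2 (-(π p.2.2)) := by
      funext i; fin_cases i <;> simp [Function.update, map_neg]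
    have h2 : Function.update ![π p.1.1, π p.1.2, π p.2.2] 2 (π p.2.2)
        = ![π p.1.1, π p.1.2, π p.2.2] := by
      funext i; fin_cases i <;> simp [Function.update]
    rw [h1, AlternatingMap.map_update_neg, h2]
  -- ## Negation membership
  have hmemneg : ∀ p ∈ periodDomain B, (p.1, (-p.2.1, -p.2.2)) ∈ periodDomain B := by
    rintro p ⟨h1, h2, h3, h4⟩
    refine ⟨h1, h2, ?_, by simpa using h4⟩
    rw [Bc_eq_zero] at h3 ⊢
    constructor
    · show B p.1.1 (-p.2.2) - B p.1.2 (0 : V) = 0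
      rw [map_neg, map_zero]
      have := h3.1
      simp only [toC] at this
      rw [map_zero] at this
      linarith
    · show B p.1.1 (0 : V) + B p.1.2 (-p.2.2) = 0
      rw [map_neg, map_zero]
      have := h3.2
      simp only [toC] at this
      rw [map_zero] at this
      linarith
  -- ## Conclusion
  refine ⟨⟨_, hq⟩, fun p hp => ⟨hmemneg p hp, ?_⟩⟩
  intro hcomp
  set p' : (V × V) × (V × V) := (p.1, (-p.2.1, -p.2.2)) with hp'
  have hp'mem : p' ∈ periodDomain B := hmemneg p hp
  set C := connectedComponentIn (periodDomain B) p with hC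
  have hpC : p ∈ C := mem_connectedComponentIn hp
  have hp'C : p' ∈ C := by rw [hcomp]; exact mem_connectedComponentIn hp'mem
  have hCsub : C ⊆ periodDomain B := connectedComponentIn_subset _ _
  have hconn : IsPreconnected C := isPreconnected_connectedComponentIn
  have hFp' : F p' = -F p := hFneg p
  have : ∃ z ∈ C, F z = 0 := by
    rcases le_or_gt (F p) 0 with hle | hlt
    · obtain ⟨z, hz, hz0⟩ := hconn.intermediate_value₂ hpC hp'C
        hFcont.continuousOn continuousOn_const hle (by rw [hFp']; linarith)
      exact ⟨z, hz, hz0⟩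
    · obtain ⟨z, hz, hz0⟩ := hconn.intermediate_value₂ hp'C hpC
        hFcont.continuousOn continuousOn_const (by rw [hFp']; linarith) hlt.le
      exact ⟨z, hz, hz0⟩
  obtain ⟨z, hz, hz0⟩ := this
  exact hFne z (hCsub hz) hz0
end
end

section
/- The mirror map m maps Dom(m)^𝒢 into itself: for every (α, β + ix) ∈ Dom(m)^𝒢, writing m(α, β + ix) = (α∨, β∨ + i x∨), one has (α∨)² = 0, α∨·(conjugate of α∨) > 0, α∨·x∨ = 0, (x∨)² > 0, (Im α∨)·v = 0, (Re α∨)·v = n/((Re α)·v) ≠ 0, x∨·v = 0, and β∨·v = 0; hence m(α, β + ix) ∈ Dom(m)^𝒢. -/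
/- Context: `V` is a finite-dimensional real vector space with a nondegenerate symmetric
bilinear form `B` of signature `(3, dim V − 3)`.  We model the complexification `V_ℂ`
by pairs `(a, b) : V × V` representing `a + i·b`. -/

noncomputable section

/- Mirror-map context: fix `n > 0` and `v, v* ∈ V` spanning a hyperbolic plane `U(n)`:
`v² = (v*)² = 0`, `v·v* = n`. -/

/-- The projection `pr(y) = y − ((y·v*)/n)·v − ((y·v)/n)·v*` on the complexification. -/
def prC {V : Type*} [AddCommGroup V] [Module ℝ V] (B : LinearMap.BilinForm ℝ V)
    (v vs : V) (n : ℝ) (y : V × V) : V × V :=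
  y - cSMul (Bc B y (toC vs) / (n : ℂ)) (toC v) - cSMul (Bc B y (toC v) / (n : ℂ)) (toC vs)

/-- The projection `pr` on real vectors: `pr(z) = z − ((z·v*)/n)·v − ((z·v)/n)·v*`. -/
def prR {V : Type*} [AddCommGroup V] [Module ℝ V] (B : LinearMap.BilinForm ℝ V)
    (v vs : V) (n : ℝ) (z : V) : V :=
  z - (B z vs / n) • v - (B z v / n) • vs

/-- The domain `Dom(m)^𝒢` of the mirror map: points `(α, β + ix) ∈ 𝒢` with
`Im α · v = 0`, `Re α · v ≠ 0`, `x·v = 0`, `β·v = 0`. -/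
def domM {V : Type*} [AddCommGroup V] [Module ℝ V] (B : LinearMap.BilinForm ℝ V)
    (v : V) : Set ((V × V) × (V × V)) :=
  {p | p ∈ periodDomain B ∧ B p.1.2 v = 0 ∧ B p.1.1 v ≠ 0 ∧ B p.2.2 v = 0 ∧ B p.2.1 v = 0}

/-- The mirror map
`m(α, β+ix) = ( [√n·pr(β+ix) − ½((β+ix)²)·v + v*] / (Re α · v), [√n·pr(α) − (α·β)·v] / (Re α · v) )`. -/
def mir {V : Type*} [AddCommGroup V] [Module ℝ V] (B : LinearMap.BilinForm ℝ V)
    (v vs : V) (n : ℝ) (p : (V × V) × (V × V)) : (V × V) × (V × V) :=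
  ((B p.1.1 v)⁻¹ •
      (Real.sqrt n • prC B v vs n p.2 - cSMul (Bc B p.2 p.2 / 2) (toC v) + toC vs),
   (B p.1.1 v)⁻¹ •
      (Real.sqrt n • prC B v vs n p.1 - cSMul (Bc B p.1 (toC p.2.1)) (toC v)))

set_option maxHeartbeats 4000000 in
lemma mir_eq {V : Type*} [AddCommGroup V] [Module ℝ V] (B : LinearMap.BilinForm ℝ V)
    (n : ℝ) (hn : n ≠ 0) (v vs a b β x : V) (ht : B a v ≠ 0) :
    mir B v vs n ((a,b),(β,x)) =
    (((B a v)⁻¹ • (Real.sqrt n • (β - (B β vs/n)•v - (B β v/n)•vs) - ((B β β - B x x)/2)•v + vs),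
      (B a v)⁻¹ • (Real.sqrt n • (x - (B x vs/n)•v - (B x v/n)•vs) - ((B β x + B x β)/2)•v)),
     ((B a v)⁻¹ • (Real.sqrt n • (a - (B a vs/n)•v - (B a v/n)•vs) - (B a β)•v),
      (B a v)⁻¹ • (Real.sqrt n • (b - (B b vs/n)•v - (B b v/n)•vs) - (B b β)•v))) := by
  simp only [mir, prC, cSMul, toC, Bc, Complex.div_re, Complex.div_im, Complex.normSq_apply,
    Complex.ofReal_re, Complex.ofReal_im, Prod.smul_mk, Prod.mk_sub_mk, Prod.mk_add_mk,
    Prod.ext_iff, smul_zero, sub_zero, zero_smul, add_zero, mul_zero, zero_div, zero_add,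
    Complex.div_ofNat_re, Complex.div_ofNat_im, map_zero, LinearMap.zero_apply,
    Complex.re_ofNat, Complex.im_ofNat]
  refine ⟨⟨?_, ?_⟩, ?_, ?_⟩ <;> · match_scalars <;> · field_simp; try ring


set_option maxHeartbeats 4000000 in
/-- The mirror map maps `Dom(m)^𝒢` into itself; writing
`m(α, β + ix) = (α∨, β∨ + i x∨)`, one has `(α∨)² = 0`, `α∨·ᾱ∨ > 0`, `α∨·x∨ = 0`,
`(x∨)² > 0`, `Im α∨ · v = 0`, `Re α∨ · v = n/(Re α · v) ≠ 0`, `x∨·v = 0`, `β∨·v = 0`. -/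
theorem statement4 {V : Type*} [NormedAddCommGroup V] [NormedSpace ℝ V] [FiniteDimensional ℝ V]
    (B : LinearMap.BilinForm ℝ V)
    (hsymm : ∀ x y : V, B x y = B y x)
    (hnd : ∀ x : V, (∀ y : V, B x y = 0) → x = 0)
    (hsig : IsSigThree B)
    (n : ℕ) (hn : 0 < n) (v vs : V)
    (hv : B v v = 0) (hvs : B vs vs = 0) (hvvs : B v vs = (n : ℝ))
    (p : (V × V) × (V × V)) (hp : p ∈ domM B v) :
    Bc B (mir B v vs n p).1 (mir B v vs n p).1 = 0 ∧
    0 < (Bc B (mir B v vs n p).1 (conjC (mir B v vs n p).1)).re ∧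
    Bc B (mir B v vs n p).1 (toC (mir B v vs n p).2.2) = 0 ∧
    0 < B (mir B v vs n p).2.2 (mir B v vs n p).2.2 ∧
    B (mir B v vs n p).1.2 v = 0 ∧
    B (mir B v vs n p).1.1 v = (n : ℝ) / B p.1.1 v ∧
    B (mir B v vs n p).1.1 v ≠ 0 ∧
    B (mir B v vs n p).2.2 v = 0 ∧
    B (mir B v vs n p).2.1 v = 0 ∧
    mir B v vs n p ∈ domM B v := by
  obtain ⟨⟨a, b⟩, β, x⟩ := p
  obtain ⟨⟨hpd1, hpd2, hpd3, hpd4⟩, hbv, hav, hxv, hβv⟩ := hp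
  have hnn : (n : ℝ) ≠ 0 := by positivity
  have hnpos : (0:ℝ) < n := by positivity
  -- extract scalar facts
  have h1re := congrArg Complex.re hpd1
  have h1im := congrArg Complex.im hpd1
  simp only [Bc, Complex.zero_re, Complex.zero_im] at h1re h1im
  have haa : B a a = B b b := by linarith
  have hab : B a b = 0 := by have := hsymm b a; linarith
  have hba : B b a = 0 := by rw [hsymm]; exact hab
  have h3re := congrArg Complex.re hpd3
  have h3im := congrArg Complex.im hpd3
  simp only [Bc, toC, Complex.zero_re, Complex.zero_im, map_zero, LinearMap.zero_apply] at h3re h3im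
  have hax : B a x = 0 := by simpa using h3re
  have hbx : B b x = 0 := by simpa using h3im
  have hxa : B x a = 0 := by rw [hsymm]; exact hax
  have hxb : B x b = 0 := by rw [hsymm]; exact hbx
  simp only [Bc, conjC, map_neg, LinearMap.neg_apply, sub_neg_eq_add] at hpd2
  -- hpd2 : 0 < B a a + B b b
  have hbb : 0 < B b b := by rw [haa] at hpd2; linarith
  have hvb : B v b = 0 := by rw [hsymm]; exact hbv
  have hvx : B v x = 0 := by rw [hsymm]; exact hxv
  have hvβ : B v β = 0 := by rw [hsymm]; exact hβv
  have hvsv : B vs v = (n : ℝ) := by rw [hsymm]; exact hvvs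
  set s := Real.sqrt (n : ℝ) with hsdef
  have hs : s * s = (n : ℝ) := Real.mul_self_sqrt (by positivity)
  rw [mir_eq B (n:ℝ) hnn v vs a b β x hav]
  have c5 : B ((B a v)⁻¹ • (s • (x - (B x vs/(n:ℝ))•v - (B x v/(n:ℝ))•vs) - ((B β x + B x β)/2)•v)) v = 0 := by
    simp only [map_sub, map_add, map_smul, LinearMap.sub_apply, LinearMap.add_apply,
      LinearMap.smul_apply, smul_eq_mul, hv, hvsv, hxv, hvb, hvx, hvβ]
    ring
  have c8 : B ((B a v)⁻¹ • (s • (b - (B b vs/(n:ℝ))•v - (B b v/(n:ℝ))•vs) - (B b β)•v)) v = 0 := by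
    simp only [map_sub, map_add, map_smul, LinearMap.sub_apply, LinearMap.add_apply,
      LinearMap.smul_apply, smul_eq_mul, hv, hvsv, hbv]
    field_simp
    ring
  have c9 : B ((B a v)⁻¹ • (s • (a - (B a vs/(n:ℝ))•v - (B a v/(n:ℝ))•vs) - (B a β)•v)) v = 0 := by
    simp only [map_sub, map_add, map_smul, LinearMap.sub_apply, LinearMap.add_apply,
      LinearMap.smul_apply, smul_eq_mul, hv, hvsv]
    field_simp
    ring
  have c6 : B ((B a v)⁻¹ • (s • (β - (B β vs/(n:ℝ))•v - (B β v/(n:ℝ))•vs) - ((B β β - B x x)/2)•v + vs)) v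
      = (n : ℝ) / B a v := by
    simp only [map_sub, map_add, map_smul, LinearMap.sub_apply, LinearMap.add_apply,
      LinearMap.smul_apply, smul_eq_mul, hv, hvsv, hβv]
    field_simp
    ring
  have c7 : ((n : ℝ) / B a v) ≠ 0 := div_ne_zero hnn hav
  set A1 := (B a v)⁻¹ • (s • (β - (B β vs/(n:ℝ))•v - (B β v/(n:ℝ))•vs) - ((B β β - B x x)/2)•v + vs) with hA1
  set A2 := (B a v)⁻¹ • (s • (x - (B x vs/(n:ℝ))•v - (B x v/(n:ℝ))•vs) - ((B β x + B x β)/2)•v) with hA2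
  set A3 := (B a v)⁻¹ • (s • (a - (B a vs/(n:ℝ))•v - (B a v/(n:ℝ))•vs) - (B a β)•v) with hA3
  set A4 := (B a v)⁻¹ • (s • (b - (B b vs/(n:ℝ))•v - (B b v/(n:ℝ))•vs) - (B b β)•v) with hA4
  have e11 : B A1 A1 = (n:ℝ) * B x x / (B a v)^2 := by
    rw [hA1]
    simp only [map_sub, map_add, map_smul, LinearMap.sub_apply, LinearMap.add_apply,
      LinearMap.smul_apply, smul_eq_mul, hv, hvs, hvvs, hvsv, hbv, hxv, hβv, hvb, hvx, hvβ,
      hsymm vs β, hsymm vs x, hsymm x β]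
    field_simp
    rw [← hs]; ring
  have e22 : B A2 A2 = (n:ℝ) * B x x / (B a v)^2 := by
    rw [hA2]
    simp only [map_sub, map_add, map_smul, LinearMap.sub_apply, LinearMap.add_apply,
      LinearMap.smul_apply, smul_eq_mul, hv, hvs, hvvs, hvsv, hbv, hxv, hβv, hvb, hvx, hvβ,
      hsymm vs β, hsymm vs x, hsymm x β]
    field_simp
    rw [← hs]; ring
  have e12 : B A1 A2 = 0 := by
    rw [hA1, hA2]
    simp only [map_sub, map_add, map_smul, LinearMap.sub_apply, LinearMap.add_apply,
      LinearMap.smul_apply, smul_eq_mul, hv, hvs, hvvs, hvsv, hbv, hxv, hβv, hvb, hvx, hvβ,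
      hsymm vs β, hsymm vs x, hsymm x β]
    field_simp
    rw [← hs]; ring
  have e21 : B A2 A1 = 0 := by rw [hsymm]; exact e12
  have e14 : B A1 A4 = 0 := by
    rw [hA1, hA4]
    simp only [map_sub, map_add, map_smul, LinearMap.sub_apply, LinearMap.add_apply,
      LinearMap.smul_apply, smul_eq_mul, hv, hvs, hvvs, hvsv, hbv, hxv, hβv, hvb, hvx, hvβ,
      hsymm vs β, hsymm vs x, hsymm x β, hsymm vs b, hsymm β b, hsymm x b, hxb, hbx]
    field_simp
    rw [← hs]; ring
  have e24 : B A2 A4 = 0 := by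
    rw [hA2, hA4]
    simp only [map_sub, map_add, map_smul, LinearMap.sub_apply, LinearMap.add_apply,
      LinearMap.smul_apply, smul_eq_mul, hv, hvs, hvvs, hvsv, hbv, hxv, hβv, hvb, hvx, hvβ,
      hsymm vs β, hsymm vs x, hsymm x β, hsymm vs b, hsymm β b, hsymm x b, hxb, hbx]
    field_simp
    try (rw [← hs]; ring)
  have e44 : B A4 A4 = (n:ℝ) * B b b / (B a v)^2 := by
    rw [hA4]
    simp only [map_sub, map_add, map_smul, LinearMap.sub_apply, LinearMap.add_apply,
      LinearMap.smul_apply, smul_eq_mul, hv, hvs, hvvs, hvsv, hbv, hvb, hsymm vs b, hsymm β b]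
    field_simp
    rw [← hs]; ring
  have tpos : (0:ℝ) < (B a v)^2 := pow_two_pos_of_ne_zero hav
  have c1 : Bc B (A1, A2) (A1, A2) = 0 := by
    simp only [Bc, Complex.ext_iff, Complex.zero_re, Complex.zero_im, e11, e22, e12, e21]
    constructor <;> ring
  have c2 : 0 < (Bc B (A1, A2) (conjC (A1, A2))).re := by
    simp only [Bc, conjC, map_neg, LinearMap.neg_apply, sub_neg_eq_add, e11, e22]
    have : (n:ℝ) * B x x / (B a v)^2 + (n:ℝ) * B x x / (B a v)^2 > 0 := by
      have : 0 < (n:ℝ) * B x x / (B a v)^2 := div_pos (by positivity) tpos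
      linarith
    exact this
  have c3 : Bc B (A1, A2) (toC A4) = 0 := by
    simp only [Bc, toC, Complex.ext_iff, Complex.zero_re, Complex.zero_im, map_zero,
      LinearMap.zero_apply, e14, e24]
    constructor <;> ring
  have c4 : 0 < B A4 A4 := by
    rw [e44]; exact div_pos (by positivity) tpos
  exact ⟨c1, c2, c3, c4, c5, c6, by rw [c6]; exact c7, c8, c9,
    ⟨⟨c1, c2, c3, c4⟩, c5, by rw [c6]; exact c7, c8, c9⟩⟩
end
end

section
/- The mirror map m is an involution on Dom(m)^𝒢: for every (α, β + ix) ∈ Dom(m)^𝒢 one has m(m(α, β + ix)) = (α, β + ix). -/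
/- Context: `V` is a finite-dimensional real vector space with a nondegenerate symmetric
bilinear form `B` of signature `(3, dim V − 3)`.  We model the complexification `V_ℂ`
by pairs `(a, b) : V × V` representing `a + i·b`. -/

noncomputable section

set_option maxHeartbeats 4000000 in
/-- The mirror map `m` is an involution on `Dom(m)^𝒢`:
`m(m(α, β + ix)) = (α, β + ix)` for every `(α, β + ix) ∈ Dom(m)^𝒢`. -/
theorem statement5 {V : Type*} [NormedAddCommGroup V] [NormedSpace ℝ V] [FiniteDimensional ℝ V]
    (B : LinearMap.BilinForm ℝ V)
    (hsymm : ∀ x y : V, B x y = B y x)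
    (hnd : ∀ x : V, (∀ y : V, B x y = 0) → x = 0)
    (hsig : IsSigThree B)
    (n : ℕ) (hn : 0 < n) (v vs : V)
    (hv : B v v = 0) (hvs : B vs vs = 0) (hvvs : B v vs = (n : ℝ))
    (p : (V × V) × (V × V)) (hp : p ∈ domM B v) :
    mir B v vs n (mir B v vs n p) = p := by
  obtain ⟨⟨a1, a2⟩, β, x⟩ := p
  obtain ⟨⟨hαα, hpos, hαx, hx2⟩, ha2v, ha1v, hxv, hβv⟩ := hp
  simp only [Bc, toC, conjC, Complex.ext_iff, Complex.zero_re, Complex.zero_im,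
    map_zero, LinearMap.zero_apply, add_zero, sub_zero, zero_add] at hαα hαx
  simp only at ha2v ha1v hxv hβv
  have hs : Real.sqrt n * Real.sqrt n = (n:ℝ) := Real.mul_self_sqrt (Nat.cast_nonneg n)
  set s := Real.sqrt n with hsdef
  have hnpos : (0:ℝ) < (n:ℝ) := by exact_mod_cast hn
  have hs0 : s ≠ 0 := by
    intro h; rw [h, mul_zero] at hs; exact hnpos.ne hs
  have hncast : (n:ℝ) = s * s := hs.symm
  have h22 : B a2 a2 = B a1 a1 := by linarith [hαα.1]
  have h12 : B a1 a2 = 0 := by linarith [hαα.2, hsymm a1 a2]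
  have h21 : B a2 a1 = 0 := by rw [hsymm]; exact h12
  have h1x : B a1 x = 0 := hαx.1
  have h2x : B a2 x = 0 := hαx.2
  have hx1 : B x a1 = 0 := by rw [hsymm]; exact h1x
  have hx2' : B x a2 = 0 := by rw [hsymm]; exact h2x
  have hva2 : B v a2 = 0 := by rw [hsymm]; exact ha2v
  have hvx : B v x = 0 := by rw [hsymm]; exact hxv
  have hvβ : B v β = 0 := by rw [hsymm]; exact hβv
  have hvvs' : B v vs = s * s := by rw [hvvs]; exact hncast
  have hvsv : B vs v = s * s := by rw [hsymm]; exact hvvs'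
  have hva1 : B v a1 = B a1 v := hsymm v a1
  have hvsa1 : B vs a1 = B a1 vs := hsymm vs a1
  have hvsa2 : B vs a2 = B a2 vs := hsymm vs a2
  have hvsβ : B vs β = B β vs := hsymm vs β
  have hvsx : B vs x = B x vs := hsymm vs x
  have hβa1 : B β a1 = B a1 β := hsymm β a1
  have hβa2 : B β a2 = B a2 β := hsymm β a2
  have hxβ : B x β = B β x := hsymm x β
  have h2c : (2:ℂ) = ((2:ℝ):ℂ) := by norm_num
  have hss : Real.sqrt (s * s) = s := Real.sqrt_mul_self (Real.sqrt_nonneg _)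
  rw [hncast]
  simp only [mir, prC, Bc, cSMul, toC, h2c, Complex.div_ofReal_re, Complex.div_ofReal_im,
    Prod.fst_add, Prod.fst_sub, Prod.smul_fst, Prod.snd_add, Prod.snd_sub, Prod.smul_snd,
    Prod.mk_add_mk, Prod.mk_sub_mk, Prod.smul_mk,
    map_add, map_sub, map_smul, map_neg, map_zero,
    LinearMap.add_apply, LinearMap.sub_apply, LinearMap.smul_apply, LinearMap.neg_apply,
    LinearMap.zero_apply, smul_eq_mul,
    hv, hvs, hvvs', hvsv, hva1, hva2, hvx, hvβ, hvsa1, hvsa2, hvsβ, hvsx,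
    ha2v, hxv, hβv, h22, h12, h21, h1x, h2x, hx1, hx2', hβa1, hβa2, hxβ,
    Prod.mk.injEq, hss]
  refine ⟨⟨?_, ?_⟩, ?_, ?_⟩ <;>
  · match_scalars <;> (field_simp <;> ring)
end
end

section
/- The map h intertwines the mirror map m with the lattice mirror involution: for every p = (α, β + ix) ∈ Dom(m)^𝒢, writing h(p) = (δ₁, δ₂) and h(m(p)) = (γ₁, γ₂), there exist nonzero complex numbers c₁ and c₂ such that γ₁ = c₁·ξ(δ₂) and γ₂ = c₂·ξ(δ₁), where ξ is extended ℂ-linearly to V̂_ℂ. (That is, h ∘ m = m̄ ∘ h, where m̄ = ι ∘ ξ acts on pairs of complex lines by applying ξ and exchanging the two factors.) -/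
/- Context: `V` is a finite-dimensional real vector space with a nondegenerate symmetric
bilinear form `B` of signature `(3, dim V − 3)`.  We model the complexification `V_ℂ`
by pairs `(a, b) : V × V` representing `a + i·b`. -/

set_option maxHeartbeats 16000000

noncomputable section

/- Enlargement `V̂ = V ⊕ ℝw ⊕ ℝw*` of `V` by a hyperbolic plane `U(n)`:
we model `V̂` as `V × ℝ × ℝ` with `w = (0, 1, 0)` and `w* = (0, 0, 1)`. -/

/-- The bilinear form of `V̂`: it restricts to `B` on `V`, satisfies `w² = (w*)² = 0`,
`w·w* = n`, and `w, w*` are orthogonal to `V`. -/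
def Bhat {V : Type*} [AddCommGroup V] [Module ℝ V] (B : LinearMap.BilinForm ℝ V) (n : ℝ) :
    LinearMap.BilinForm ℝ (V × ℝ × ℝ) :=
  LinearMap.mk₂ ℝ (fun y z => B y.1 z.1 + n * (y.2.1 * z.2.2 + y.2.2 * z.2.1))
    (fun m₁ m₂ z => by
      simp only [Prod.fst_add, Prod.snd_add, map_add, LinearMap.add_apply]; ring)
    (fun c m z => by
      simp only [Prod.smul_fst, Prod.smul_snd, map_smul, LinearMap.smul_apply,
        smul_eq_mul]; ring)
    (fun m z₁ z₂ => by
      simp only [Prod.fst_add, Prod.snd_add, map_add, LinearMap.add_apply]; ring)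
    (fun c m z => by
      simp only [Prod.smul_fst, Prod.smul_snd, map_smul, LinearMap.smul_apply,
        smul_eq_mul]; ring)

/-- The basis vector `w` of the added hyperbolic plane. -/
def wHat (V : Type*) [AddCommGroup V] : V × ℝ × ℝ := (0, 1, 0)

/-- The basis vector `w*` of the added hyperbolic plane. -/
def wsHat (V : Type*) [AddCommGroup V] : V × ℝ × ℝ := (0, 0, 1)

/-- The ℂ-linear embedding of the complexification of `V` into that of `V̂`. -/
def jC {V : Type*} [AddCommGroup V] (y : V × V) : (V × ℝ × ℝ) × (V × ℝ × ℝ) :=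
  ((y.1, 0, 0), (y.2, 0, 0))

/-- The map `h(α, β + ix) = (√n·α − (α·β)·w, √n·β + ½(x² − β²)·w + w* + i(√n·x − (x·β)·w))`
from `𝒢` into the complexification of `V̂`. -/
def hmap {V : Type*} [AddCommGroup V] [Module ℝ V] (B : LinearMap.BilinForm ℝ V) (n : ℝ)
    (p : (V × V) × (V × V)) : ((V × ℝ × ℝ) × (V × ℝ × ℝ)) × ((V × ℝ × ℝ) × (V × ℝ × ℝ)) :=
  (Real.sqrt n • jC p.1 - cSMul (Bc B p.1 (toC p.2.1)) (toC (wHat V)),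
   (Real.sqrt n • (p.2.1, (0 : ℝ), (0 : ℝ)) +
      ((B p.2.2 p.2.2 - B p.2.1 p.2.1) / 2) • wHat V + wsHat V,
    Real.sqrt n • (p.2.2, (0 : ℝ), (0 : ℝ)) - (B p.2.2 p.2.1) • wHat V))

/-- The involution `ξ` of `V̂`: the linear isometry fixing the orthogonal complement of
`span(v, v*, w, w*)` pointwise and exchanging `v ↔ w`, `v* ↔ w*`.  Explicitly, writing
`u = z + a·v + b·v*` with `z ⊥ v, v*` (so `a = (u·v*)/n`, `b = (u·v)/n`),
`ξ(u + c·w + d·w*) = z + c·v + d·v* + a·w + b·w*`. -/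
def xiR {V : Type*} [AddCommGroup V] [Module ℝ V] (B : LinearMap.BilinForm ℝ V)
    (v vs : V) (n : ℝ) (u : V × ℝ × ℝ) : V × ℝ × ℝ :=
  (prR B v vs n u.1 + u.2.1 • v + u.2.2 • vs, B u.1 vs / n, B u.1 v / n)

/-- The ℂ-linear extension of `ξ` to the complexification of `V̂`. -/
def xiC {V : Type*} [AddCommGroup V] [Module ℝ V] (B : LinearMap.BilinForm ℝ V)
    (v vs : V) (n : ℝ) (y : (V × ℝ × ℝ) × (V × ℝ × ℝ)) : (V × ℝ × ℝ) × (V × ℝ × ℝ) :=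
  (xiR B v vs n y.1, xiR B v vs n y.2)

/-- `h` intertwines the mirror map `m` with the lattice mirror involution
`m̄ = ι ∘ ξ`: for `p ∈ Dom(m)^𝒢`, writing `h(p) = (δ₁, δ₂)` and `h(m(p)) = (γ₁, γ₂)`, there
are nonzero `c₁, c₂ ∈ ℂ` with `γ₁ = c₁·ξ(δ₂)` and `γ₂ = c₂·ξ(δ₁)` (equality of complex
lines, i.e. `h ∘ m = m̄ ∘ h` on the level of the period domain `Gr^{po}_{2,2}`). -/
theorem statement8 {V : Type*} [NormedAddCommGroup V] [NormedSpace ℝ V] [FiniteDimensional ℝ V]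
    (B : LinearMap.BilinForm ℝ V)
    (hsymm : ∀ x y : V, B x y = B y x)
    (hnd : ∀ x : V, (∀ y : V, B x y = 0) → x = 0)
    (hsig : IsSigThree B)
    (n : ℕ) (hn : 0 < n) (v vs : V)
    (hv : B v v = 0) (hvs : B vs vs = 0) (hvvs : B v vs = (n : ℝ))
    (p : (V × V) × (V × V)) (hp : p ∈ domM B v) :
    ∃ c₁ c₂ : ℂ, c₁ ≠ 0 ∧ c₂ ≠ 0 ∧
      (hmap B n (mir B v vs n p)).1 = cSMul c₁ (xiC B v vs n (hmap B n p).2) ∧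
      (hmap B n (mir B v vs n p)).2 = cSMul c₂ (xiC B v vs n (hmap B n p).1) := by
  obtain ⟨⟨α₁, α₂⟩, β, x⟩ := p
  obtain ⟨⟨hαα, -, hαx, -⟩, h2v, h1v, hxv, hβv⟩ := hp
  have e1 : B α₁ α₁ - B α₂ α₂ = 0 := congrArg Complex.re hαα
  have e2 : B α₁ α₂ + B α₂ α₁ = 0 := congrArg Complex.im hαα
  have e3 : B α₁ x - B α₂ 0 = 0 := congrArg Complex.re hαx
  have e4 : B α₁ 0 + B α₂ x = 0 := congrArg Complex.im hαx
  simp only [map_zero, sub_zero, zero_add, LinearMap.zero_apply] at e3 e4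
  have h1v' : B α₁ v ≠ 0 := h1v
  have h12 : B α₁ α₂ = 0 := by have := hsymm α₂ α₁; linarith
  have h11 : B α₁ α₁ = B α₂ α₂ := by linarith
  have hn0 : (n:ℝ) ≠ 0 := by positivity
  have hs2 : Real.sqrt n * Real.sqrt n = (n:ℝ) := Real.mul_self_sqrt (by positivity)
  have hs0 : Real.sqrt (n:ℝ) ≠ 0 := by positivity
  refine ⟨((Real.sqrt n / B α₁ v : ℝ) : ℂ), ((Real.sqrt n / B α₁ v : ℝ) : ℂ),
    by simpa using div_ne_zero hs0 h1v, by simpa using div_ne_zero hs0 h1v, ?_, ?_⟩ <;>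
  · simp only [hmap, mir, xiC, xiR, jC, prC, prR, Bc, toC, cSMul, wHat, wsHat, conjC,
      Prod.mk.injEq, Prod.smul_mk, Prod.fst_add, Prod.snd_add, Prod.fst_sub, Prod.snd_sub,
      smul_eq_mul, Complex.ofReal_re, Complex.ofReal_im, map_add, map_sub, map_smul,
      LinearMap.add_apply, LinearMap.sub_apply, LinearMap.smul_apply, map_zero,
      LinearMap.zero_apply, smul_zero, zero_smul, mul_zero, zero_mul, sub_zero, zero_sub,
      add_zero, zero_add, Prod.mk_add_mk, Prod.mk_sub_mk, neg_zero,
      Complex.div_ofReal_re, Complex.div_ofReal_im, Complex.div_ofNat_re, Complex.div_ofNat_im,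
      Complex.div_natCast_re, Complex.div_natCast_im,
      hsymm v α₁, hsymm vs α₁, hsymm v α₂, hsymm vs α₂, hsymm β α₁, hsymm β α₂,
      hsymm x α₁, hsymm x α₂, hsymm v x, hsymm vs x, hsymm v β, hsymm vs β,
      hsymm vs v, hsymm x β, hsymm α₂ α₁, ← h11,
      hxv, hβv, h2v, e3, e4, h12, hv, hvs, hvvs]
    generalize hg : Real.sqrt (n:ℝ) = S
    rw [hg] at hs2 hs0
    simp only [← hs2]
    and_intros <;>
      first
      | (field_simp; first | done | ring1 | (left; ring1) | tauto)
      | (match_scalars <;> (field_simp; first | done | ring1 | (left; ring1) | tauto))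
end
end

section
/- The mirror involution changes the connected component: for every p = (α, β + ix) ∈ Dom(m)^𝒢, the points p and m(p) lie in distinct connected components of 𝒢. -/
/- Context: `V` is a finite-dimensional real vector space with a nondegenerate symmetric
bilinear form `B` of signature `(3, dim V − 3)`.  We model the complexification `V_ℂ`
by pairs `(a, b) : V × V` representing `a + i·b`. -/

noncomputable section

lemma neg_semidef {V : Type*} [AddCommGroup V] [Module ℝ V] [FiniteDimensional ℝ V]
    (B : LinearMap.BilinForm ℝ V) (hsymm : ∀ x y : V, B x y = B y x)
    (hsig : ∃ P N : Submodule ℝ V, IsCompl P N ∧ Module.finrank ℝ P = 3 ∧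
      (∀ x ∈ P, ∀ y ∈ N, B x y = 0) ∧
      (∀ x ∈ P, x ≠ 0 → 0 < B x x) ∧ (∀ y ∈ N, y ≠ 0 → B y y < 0))
    (f1 f2 f3 u : V)
    (h11 : 0 < B f1 f1) (h22 : 0 < B f2 f2) (h33 : 0 < B f3 f3)
    (h12 : B f1 f2 = 0) (h13 : B f1 f3 = 0) (h23 : B f2 f3 = 0)
    (hu1 : B f1 u = 0) (hu2 : B f2 u = 0) (hu3 : B f3 u = 0) : B u u ≤ 0 := by
  by_contra hpos
  push_neg at hpos
  obtain ⟨P, N, hPN, hP3, _horth, _hposP, hneg⟩ := hsig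
  set π := Submodule.linearProjOfIsCompl P N hPN with hπ
  set w : Fin 4 → V := ![f1, f2, f3, u] with hw
  have h21 : B f2 f1 = 0 := by rw [hsymm f2 f1]; exact h12
  have h31 : B f3 f1 = 0 := by rw [hsymm f3 f1]; exact h13
  have h32 : B f3 f2 = 0 := by rw [hsymm f3 f2]; exact h23
  have hv1 : B u f1 = 0 := by rw [hsymm u f1]; exact hu1
  have hv2 : B u f2 = 0 := by rw [hsymm u f2]; exact hu2
  have hv3 : B u f3 = 0 := by rw [hsymm u f3]; exact hu3
  have hweval : w 0 = f1 ∧ w 1 = f2 ∧ w 2 = f3 ∧ w 3 = u := by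
    refine ⟨rfl, rfl, rfl, rfl⟩
  obtain ⟨hw0, hw1, hw2, hw3⟩ := hweval
  have hww : ∀ i j, i ≠ j → B (w i) (w j) = 0 := by
    intro i j hij
    fin_cases i <;> fin_cases j <;>
      simp only [hw0, hw1, hw2, hw3] <;>
      first
        | exact absurd rfl hij
        | assumption
  have hwpos : ∀ i, 0 < B (w i) (w i) := by
    intro i
    fin_cases i <;> simp only [hw0, hw1, hw2, hw3] <;> assumption
  have hind : LinearIndependent ℝ (fun i => π (w i)) := by
    rw [Fintype.linearIndependent_iff]
    intro g hg
    set z := ∑ i, g i • w i with hzdef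
    have hzN : z ∈ N := by
      have hπz : π z = 0 := by
        rw [hzdef, map_sum]
        simpa [map_smul] using hg
      have hker : LinearMap.ker π = N := Submodule.linearProjOfIsCompl_ker hPN
      rw [← hker]
      exact hπz
    have hBwz : ∀ j, B (w j) z = g j * B (w j) (w j) := by
      intro j
      rw [hzdef, map_sum, Finset.sum_eq_single j]
      · simp [map_smul, smul_eq_mul]
      · intro i _ hij
        simp [map_smul, smul_eq_mul, hww j i (Ne.symm hij)]
      · intro h; exact absurd (Finset.mem_univ j) h
    have hBzy : ∀ y, B z y = ∑ j, g j * B (w j) y := by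
      intro y
      simp [hzdef, map_sum, LinearMap.sum_apply, LinearMap.smul_apply, smul_eq_mul]
    have hzz : 0 ≤ B z z := by
      rw [hBzy z]
      apply Finset.sum_nonneg
      intro j _
      rw [hBwz j]
      have := (hwpos j).le
      nlinarith [sq_nonneg (g j)]
    have hz0 : z = 0 := by
      by_contra hz
      exact absurd (hneg z hzN hz) (not_lt.mpr hzz)
    intro j
    have := hBwz j
    rw [hz0, map_zero] at this
    have hj := (hwpos j).ne'
    rcases mul_eq_zero.mp this.symm with h | h
    · exact h
    · exact absurd h hj
  have hcard := hind.fintype_card_le_finrank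
  rw [hP3] at hcard
  simp at hcard

lemma proj_ineq {V : Type*} [AddCommGroup V] [Module ℝ V] [FiniteDimensional ℝ V]
    (B : LinearMap.BilinForm ℝ V) (hsymm : ∀ x y : V, B x y = B y x)
    (hsig : ∃ P N : Submodule ℝ V, IsCompl P N ∧ Module.finrank ℝ P = 3 ∧
      (∀ x ∈ P, ∀ y ∈ N, B x y = 0) ∧
      (∀ x ∈ P, x ≠ 0 → 0 < B x x) ∧ (∀ y ∈ N, y ≠ 0 → B y y < 0))
    (f1 f2 f3 u : V)
    (h11 : 0 < B f1 f1) (h22 : 0 < B f2 f2) (h33 : 0 < B f3 f3)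
    (h12 : B f1 f2 = 0) (h13 : B f1 f3 = 0) (h23 : B f2 f3 = 0) :
    B f1 f1 * B f2 f2 * B f3 f3 * B u u ≤
      B f2 f2 * B f3 f3 * (B f1 u) ^ 2 + B f1 f1 * B f3 f3 * (B f2 u) ^ 2 +
        B f1 f1 * B f2 f2 * (B f3 u) ^ 2 := by
  set pu := u - (B f1 u / B f1 f1) • f1 - (B f2 u / B f2 f2) • f2 - (B f3 u / B f3 f3) • f3
    with hpu
  have h21 : B f2 f1 = 0 := by rw [hsymm f2 f1]; exact h12
  have h31 : B f3 f1 = 0 := by rw [hsymm f3 f1]; exact h13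
  have h32 : B f3 f2 = 0 := by rw [hsymm f3 f2]; exact h23
  have e1 : B f1 pu = 0 := by
    simp [hpu, map_sub, map_smul, smul_eq_mul, h12, h13]
    field_simp
    ring
  have e2 : B f2 pu = 0 := by
    simp [hpu, map_sub, map_smul, smul_eq_mul, h21, h23]
    field_simp
    ring
  have e3 : B f3 pu = 0 := by
    simp [hpu, map_sub, map_smul, smul_eq_mul, h31, h32]
    field_simp
    ring
  have key := neg_semidef B hsymm hsig f1 f2 f3 pu h11 h22 h33 h12 h13 h23 e1 e2 e3
  have hu1 : B u f1 = B f1 u := hsymm u f1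
  have hu2 : B u f2 = B f2 u := hsymm u f2
  have hu3 : B u f3 = B f3 u := hsymm u f3
  have c1 := h11.ne'
  have c2 := h22.ne'
  have c3 := h33.ne'
  have hexp : B f1 f1 * B f2 f2 * B f3 f3 * B pu pu =
      B f1 f1 * B f2 f2 * B f3 f3 * B u u - B f2 f2 * B f3 f3 * (B f1 u) ^ 2
        - B f1 f1 * B f3 f3 * (B f2 u) ^ 2 - B f1 f1 * B f2 f2 * (B f3 u) ^ 2 := by
    simp only [hpu, map_sub, map_smul, LinearMap.sub_apply, LinearMap.smul_apply, smul_eq_mul]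
    rw [h12, h13, h23, h21, h31, h32, hu1, hu2, hu3]
    field_simp
    ring
  have hnn : (0:ℝ) ≤ B f1 f1 * B f2 f2 * B f3 f3 :=
    (mul_nonneg (mul_nonneg h11.le h22.le) h33.le)
  have hle : B f1 f1 * B f2 f2 * B f3 f3 * B pu pu ≤ 0 :=
    mul_nonpos_of_nonneg_of_nonpos hnn key
  linarith [hexp ▸ hle]
set_option maxHeartbeats 8000000 in
/-- The mirror involution changes the connected component: for every
`p ∈ Dom(m)^𝒢`, the points `p` and `m(p)` lie in distinct connected components of `𝒢`. -/
theorem statement9 {V : Type*} [NormedAddCommGroup V] [NormedSpace ℝ V] [FiniteDimensional ℝ V]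
    (B : LinearMap.BilinForm ℝ V)
    (hsymm : ∀ x y : V, B x y = B y x)
    (hnd : ∀ x : V, (∀ y : V, B x y = 0) → x = 0)
    (hsig : IsSigThree B)
    (n : ℕ) (hn : 0 < n) (v vs : V)
    (hv : B v v = 0) (hvs : B vs vs = 0) (hvvs : B v vs = (n : ℝ))
    (p : (V × V) × (V × V)) (hp : p ∈ domM B v) :
    mir B v vs n p ∈ periodDomain B ∧
    connectedComponentIn (periodDomain B) p ≠
      connectedComponentIn (periodDomain B) (mir B v vs n p) := by
  unfold IsSigThree at hsig
  obtain ⟨hpg, h2v, hc, hxv, hbv⟩ := hp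
  obtain ⟨⟨aa, ab⟩, bb, xx⟩ := p
  simp only at h2v hc hxv hbv
  have hpmem : (((aa, ab), (bb, xx)) : (V × V) × (V × V)) ∈ periodDomain B := hpg
  obtain ⟨hg1, hg2, hg3, hg4⟩ := hpg
  simp only [Bc, conjC, toC, Complex.ext_iff, Complex.zero_re, Complex.zero_im, map_zero,
    map_neg, sub_zero, add_zero, zero_add, sub_neg_eq_add] at hg1 hg2 hg3
  have hT : 0 < B xx xx := hg4
  have h_ab_aa : B ab aa = B aa ab := hsymm ab aa
  have h_aa_ab : B aa ab = 0 := by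
    have := hg1.2; simp only [h_ab_aa] at this; linarith
  have h_abab : B ab ab = B aa aa := by linarith [hg1.1]
  have hA : 0 < B aa aa := by linarith only [hg2, h_abab]
  have hA2 : 0 < B ab ab := by rw [h_abab]; exact hA
  have h_aax : B aa xx = 0 := hg3.1
  have h_abx : B ab xx = 0 := hg3.2
  -- symmetric versions
  have s_abaa : B ab aa = 0 := by rw [h_ab_aa]; exact h_aa_ab
  have s_xaa : B xx aa = 0 := by rw [hsymm]; exact h_aax
  have s_xab : B xx ab = 0 := by rw [hsymm]; exact h_abx
  have s_vaa : B v aa = B aa v := hsymm v aa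
  have s_vab : B v ab = 0 := by rw [hsymm]; exact h2v
  have s_vbb : B v bb = 0 := by rw [hsymm]; exact hbv
  have s_vxx : B v xx = 0 := by rw [hsymm]; exact hxv
  have s_vsv : B vs v = B v vs := hsymm vs v
  have s_vsaa : B vs aa = B aa vs := hsymm vs aa
  have s_vsab : B vs ab = B ab vs := hsymm vs ab
  have s_vsbb : B vs bb = B bb vs := hsymm vs bb
  have s_vsxx : B vs xx = B xx vs := hsymm vs xx
  have s_bbaa : B bb aa = B aa bb := hsymm bb aa
  have s_bbab : B bb ab = B ab bb := hsymm bb ab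
  have s_xbb : B xx bb = B bb xx := hsymm xx bb
  -- sqrt facts
  have hnr : (0:ℝ) < (n:ℝ) := by exact_mod_cast hn
  set s : ℝ := Real.sqrt (n:ℝ) with hsdef
  have hs0 : 0 < s := Real.sqrt_pos.mpr hnr
  have hss : s * s = (n:ℝ) := Real.mul_self_sqrt hnr.le
  have hns : ((n:ℕ):ℝ) = s * s := hss.symm
  set M1 := (mir B v vs (n:ℝ) ((aa,ab),(bb,xx))).1.1 with hM1
  set M2 := (mir B v vs (n:ℝ) ((aa,ab),(bb,xx))).1.2 with hM2
  set M3 := (mir B v vs (n:ℝ) ((aa,ab),(bb,xx))).2.2 with hM3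
  have EA : B aa v * B aa v * B M1 M1 = s * s * B xx xx := by
    rw [hM1]
    simp only [mir, prC, cSMul, Bc, toC, Prod.fst_sub, Prod.snd_sub, Prod.fst_add, Prod.snd_add,
      Prod.smul_fst, Prod.smul_snd, Complex.div_re, Complex.div_im, Complex.normSq_apply,
      Complex.ofReal_re, Complex.ofReal_im, Complex.re_ofNat, Complex.im_ofNat,
      Complex.ofReal_natCast, Complex.natCast_re, Complex.natCast_im,
      map_sub, map_add, map_smul, map_zero, LinearMap.sub_apply, LinearMap.add_apply,
      LinearMap.smul_apply, LinearMap.zero_apply, smul_eq_mul,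
      hv, hvs, hvvs, h2v, hxv, hbv, h_aa_ab, h_abab, h_aax, h_abx, s_abaa,
      s_xaa, s_xab, s_vaa, s_vab, s_vbb, s_vxx, s_vsv, s_vsaa, s_vsab, s_vsbb, s_vsxx,
      s_bbaa, s_bbab, s_xbb]
    rw [← hsdef, hns]
    field_simp
    try ring
  have EB : B aa v * B aa v * B M2 M2 = s * s * B xx xx := by
    rw [hM2]
    simp only [mir, prC, cSMul, Bc, toC, Prod.fst_sub, Prod.snd_sub, Prod.fst_add, Prod.snd_add,
      Prod.smul_fst, Prod.smul_snd, Complex.div_re, Complex.div_im, Complex.normSq_apply,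
      Complex.ofReal_re, Complex.ofReal_im, Complex.re_ofNat, Complex.im_ofNat,
      Complex.ofReal_natCast, Complex.natCast_re, Complex.natCast_im,
      map_sub, map_add, map_smul, map_zero, LinearMap.sub_apply, LinearMap.add_apply,
      LinearMap.smul_apply, LinearMap.zero_apply, smul_eq_mul,
      hv, hvs, hvvs, h2v, hxv, hbv, h_aa_ab, h_abab, h_aax, h_abx, s_abaa,
      s_xaa, s_xab, s_vaa, s_vab, s_vbb, s_vxx, s_vsv, s_vsaa, s_vsab, s_vsbb, s_vsxx,
      s_bbaa, s_bbab, s_xbb]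
    rw [← hsdef, hns]
    field_simp
    try ring
  have EC : B M1 M2 = 0 := by
    rw [hM1, hM2]
    simp only [mir, prC, cSMul, Bc, toC, Prod.fst_sub, Prod.snd_sub, Prod.fst_add, Prod.snd_add,
      Prod.smul_fst, Prod.smul_snd, Complex.div_re, Complex.div_im, Complex.normSq_apply,
      Complex.ofReal_re, Complex.ofReal_im, Complex.re_ofNat, Complex.im_ofNat,
      Complex.ofReal_natCast, Complex.natCast_re, Complex.natCast_im,
      map_sub, map_add, map_smul, map_zero, LinearMap.sub_apply, LinearMap.add_apply,
      LinearMap.smul_apply, LinearMap.zero_apply, smul_eq_mul,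
      hv, hvs, hvvs, h2v, hxv, hbv, h_aa_ab, h_abab, h_aax, h_abx, s_abaa,
      s_xaa, s_xab, s_vaa, s_vab, s_vbb, s_vxx, s_vsv, s_vsaa, s_vsab, s_vsbb, s_vsxx,
      s_bbaa, s_bbab, s_xbb]
    rw [← hsdef, hns]
    field_simp
    try ring
  have ED : B M2 M1 = 0 := by
    rw [hM1, hM2]
    simp only [mir, prC, cSMul, Bc, toC, Prod.fst_sub, Prod.snd_sub, Prod.fst_add, Prod.snd_add,
      Prod.smul_fst, Prod.smul_snd, Complex.div_re, Complex.div_im, Complex.normSq_apply,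
      Complex.ofReal_re, Complex.ofReal_im, Complex.re_ofNat, Complex.im_ofNat,
      Complex.ofReal_natCast, Complex.natCast_re, Complex.natCast_im,
      map_sub, map_add, map_smul, map_zero, LinearMap.sub_apply, LinearMap.add_apply,
      LinearMap.smul_apply, LinearMap.zero_apply, smul_eq_mul,
      hv, hvs, hvvs, h2v, hxv, hbv, h_aa_ab, h_abab, h_aax, h_abx, s_abaa,
      s_xaa, s_xab, s_vaa, s_vab, s_vbb, s_vxx, s_vsv, s_vsaa, s_vsab, s_vsbb, s_vsxx,
      s_bbaa, s_bbab, s_xbb]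
    rw [← hsdef, hns]
    field_simp
    try ring
  have EE : B M1 M3 = 0 := by
    rw [hM1, hM3]
    simp only [mir, prC, cSMul, Bc, toC, Prod.fst_sub, Prod.snd_sub, Prod.fst_add, Prod.snd_add,
      Prod.smul_fst, Prod.smul_snd, Complex.div_re, Complex.div_im, Complex.normSq_apply,
      Complex.ofReal_re, Complex.ofReal_im, Complex.re_ofNat, Complex.im_ofNat,
      Complex.ofReal_natCast, Complex.natCast_re, Complex.natCast_im,
      map_sub, map_add, map_smul, map_zero, LinearMap.sub_apply, LinearMap.add_apply,
      LinearMap.smul_apply, LinearMap.zero_apply, smul_eq_mul,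
      hv, hvs, hvvs, h2v, hxv, hbv, h_aa_ab, h_abab, h_aax, h_abx, s_abaa,
      s_xaa, s_xab, s_vaa, s_vab, s_vbb, s_vxx, s_vsv, s_vsaa, s_vsab, s_vsbb, s_vsxx,
      s_bbaa, s_bbab, s_xbb]
    rw [← hsdef, hns]
    field_simp
    try ring
  have EF : B M2 M3 = 0 := by
    rw [hM2, hM3]
    simp only [mir, prC, cSMul, Bc, toC, Prod.fst_sub, Prod.snd_sub, Prod.fst_add, Prod.snd_add,
      Prod.smul_fst, Prod.smul_snd, Complex.div_re, Complex.div_im, Complex.normSq_apply,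
      Complex.ofReal_re, Complex.ofReal_im, Complex.re_ofNat, Complex.im_ofNat,
      Complex.ofReal_natCast, Complex.natCast_re, Complex.natCast_im,
      map_sub, map_add, map_smul, map_zero, LinearMap.sub_apply, LinearMap.add_apply,
      LinearMap.smul_apply, LinearMap.zero_apply, smul_eq_mul,
      hv, hvs, hvvs, h2v, hxv, hbv, h_aa_ab, h_abab, h_aax, h_abx, s_abaa,
      s_xaa, s_xab, s_vaa, s_vab, s_vbb, s_vxx, s_vsv, s_vsaa, s_vsab, s_vsbb, s_vsxx,
      s_bbaa, s_bbab, s_xbb]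
    rw [← hsdef, hns]
    field_simp
    try ring
  have EG : B aa v * B aa v * B M3 M3 = s * s * B aa aa := by
    rw [hM3]
    simp only [mir, prC, cSMul, Bc, toC, Prod.fst_sub, Prod.snd_sub, Prod.fst_add, Prod.snd_add,
      Prod.smul_fst, Prod.smul_snd, Complex.div_re, Complex.div_im, Complex.normSq_apply,
      Complex.ofReal_re, Complex.ofReal_im, Complex.re_ofNat, Complex.im_ofNat,
      Complex.ofReal_natCast, Complex.natCast_re, Complex.natCast_im,
      map_sub, map_add, map_smul, map_zero, LinearMap.sub_apply, LinearMap.add_apply,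
      LinearMap.smul_apply, LinearMap.zero_apply, smul_eq_mul,
      hv, hvs, hvvs, h2v, hxv, hbv, h_aa_ab, h_abab, h_aax, h_abx, s_abaa,
      s_xaa, s_xab, s_vaa, s_vab, s_vbb, s_vxx, s_vsv, s_vsaa, s_vsab, s_vsbb, s_vsxx,
      s_bbaa, s_bbab, s_xbb]
    rw [← hsdef, hns]
    field_simp
    try ring
  have EH : B aa v * B M1 v = s * s := by
    rw [hM1]
    simp only [mir, prC, cSMul, Bc, toC, Prod.fst_sub, Prod.snd_sub, Prod.fst_add, Prod.snd_add,
      Prod.smul_fst, Prod.smul_snd, Complex.div_re, Complex.div_im, Complex.normSq_apply,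
      Complex.ofReal_re, Complex.ofReal_im, Complex.re_ofNat, Complex.im_ofNat,
      Complex.ofReal_natCast, Complex.natCast_re, Complex.natCast_im,
      map_sub, map_add, map_smul, map_zero, LinearMap.sub_apply, LinearMap.add_apply,
      LinearMap.smul_apply, LinearMap.zero_apply, smul_eq_mul,
      hv, hvs, hvvs, h2v, hxv, hbv, h_aa_ab, h_abab, h_aax, h_abx, s_abaa,
      s_xaa, s_xab, s_vaa, s_vab, s_vbb, s_vxx, s_vsv, s_vsaa, s_vsab, s_vsbb, s_vsxx,
      s_bbaa, s_bbab, s_xbb]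
    rw [← hsdef, hns]
    field_simp
    try ring
  have R22 : B ab M2 = 0 := by
    rw [hM2]
    simp only [mir, prC, cSMul, Bc, toC, Prod.fst_sub, Prod.snd_sub, Prod.fst_add, Prod.snd_add,
      Prod.smul_fst, Prod.smul_snd, Complex.div_re, Complex.div_im, Complex.normSq_apply,
      Complex.ofReal_re, Complex.ofReal_im, Complex.re_ofNat, Complex.im_ofNat,
      Complex.ofReal_natCast, Complex.natCast_re, Complex.natCast_im,
      map_sub, map_add, map_smul, map_zero, LinearMap.sub_apply, LinearMap.add_apply,
      LinearMap.smul_apply, LinearMap.zero_apply, smul_eq_mul,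
      hv, hvs, hvvs, h2v, hxv, hbv, h_aa_ab, h_abab, h_aax, h_abx, s_abaa,
      s_xaa, s_xab, s_vaa, s_vab, s_vbb, s_vxx, s_vsv, s_vsaa, s_vsab, s_vsbb, s_vsxx,
      s_bbaa, s_bbab, s_xbb]
    rw [← hsdef, hns]
    field_simp
    ring
  have R33 : B xx M3 = 0 := by
    rw [hM3]
    simp only [mir, prC, cSMul, Bc, toC, Prod.fst_sub, Prod.snd_sub, Prod.fst_add, Prod.snd_add,
      Prod.smul_fst, Prod.smul_snd, Complex.div_re, Complex.div_im, Complex.normSq_apply,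
      Complex.ofReal_re, Complex.ofReal_im, Complex.re_ofNat, Complex.im_ofNat,
      Complex.ofReal_natCast, Complex.natCast_re, Complex.natCast_im,
      map_sub, map_add, map_smul, map_zero, LinearMap.sub_apply, LinearMap.add_apply,
      LinearMap.smul_apply, LinearMap.zero_apply, smul_eq_mul,
      hv, hvs, hvvs, h2v, hxv, hbv, h_aa_ab, h_abab, h_aax, h_abx, s_abaa,
      s_xaa, s_xab, s_vaa, s_vab, s_vbb, s_vxx, s_vsv, s_vsaa, s_vsab, s_vsbb, s_vsxx,
      s_bbaa, s_bbab, s_xbb]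
    rw [← hsdef, hns]
    field_simp
    ring
  have R23 : B aa v * B ab M3 = s * B aa aa := by
    rw [hM3]
    simp only [mir, prC, cSMul, Bc, toC, Prod.fst_sub, Prod.snd_sub, Prod.fst_add, Prod.snd_add,
      Prod.smul_fst, Prod.smul_snd, Complex.div_re, Complex.div_im, Complex.normSq_apply,
      Complex.ofReal_re, Complex.ofReal_im, Complex.re_ofNat, Complex.im_ofNat,
      Complex.ofReal_natCast, Complex.natCast_re, Complex.natCast_im,
      map_sub, map_add, map_smul, map_zero, LinearMap.sub_apply, LinearMap.add_apply,
      LinearMap.smul_apply, LinearMap.zero_apply, smul_eq_mul,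
      hv, hvs, hvvs, h2v, hxv, hbv, h_aa_ab, h_abab, h_aax, h_abx, s_abaa,
      s_xaa, s_xab, s_vaa, s_vab, s_vbb, s_vxx, s_vsv, s_vsaa, s_vsab, s_vsbb, s_vsxx,
      s_bbaa, s_bbab, s_xbb]
    rw [← hsdef, hns]
    field_simp
    try ring
  have R32 : B aa v * B xx M2 = s * B xx xx := by
    rw [hM2]
    simp only [mir, prC, cSMul, Bc, toC, Prod.fst_sub, Prod.snd_sub, Prod.fst_add, Prod.snd_add,
      Prod.smul_fst, Prod.smul_snd, Complex.div_re, Complex.div_im, Complex.normSq_apply,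
      Complex.ofReal_re, Complex.ofReal_im, Complex.re_ofNat, Complex.im_ofNat,
      Complex.ofReal_natCast, Complex.natCast_re, Complex.natCast_im,
      map_sub, map_add, map_smul, map_zero, LinearMap.sub_apply, LinearMap.add_apply,
      LinearMap.smul_apply, LinearMap.zero_apply, smul_eq_mul,
      hv, hvs, hvvs, h2v, hxv, hbv, h_aa_ab, h_abab, h_aax, h_abx, s_abaa,
      s_xaa, s_xab, s_vaa, s_vab, s_vbb, s_vxx, s_vsv, s_vsaa, s_vsab, s_vsbb, s_vsxx,
      s_bbaa, s_bbab, s_xbb]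
    rw [← hsdef, hns]
    field_simp
    try ring
  have R12 : s * B aa M2 = -(B aa v * B xx M1) := by
    rw [hM1, hM2]
    simp only [mir, prC, cSMul, Bc, toC, Prod.fst_sub, Prod.snd_sub, Prod.fst_add, Prod.snd_add,
      Prod.smul_fst, Prod.smul_snd, Complex.div_re, Complex.div_im, Complex.normSq_apply,
      Complex.ofReal_re, Complex.ofReal_im, Complex.re_ofNat, Complex.im_ofNat,
      Complex.ofReal_natCast, Complex.natCast_re, Complex.natCast_im,
      map_sub, map_add, map_smul, map_zero, LinearMap.sub_apply, LinearMap.add_apply,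
      LinearMap.smul_apply, LinearMap.zero_apply, smul_eq_mul,
      hv, hvs, hvvs, h2v, hxv, hbv, h_aa_ab, h_abab, h_aax, h_abx, s_abaa,
      s_xaa, s_xab, s_vaa, s_vab, s_vbb, s_vxx, s_vsv, s_vsaa, s_vsab, s_vsbb, s_vsxx,
      s_bbaa, s_bbab, s_xbb]
    rw [← hsdef, hns]
    field_simp
    try ring
  have R13 : s * B aa M3 = -(B aa v * B ab M1) := by
    rw [hM1, hM3]
    simp only [mir, prC, cSMul, Bc, toC, Prod.fst_sub, Prod.snd_sub, Prod.fst_add, Prod.snd_add,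
      Prod.smul_fst, Prod.smul_snd, Complex.div_re, Complex.div_im, Complex.normSq_apply,
      Complex.ofReal_re, Complex.ofReal_im, Complex.re_ofNat, Complex.im_ofNat,
      Complex.ofReal_natCast, Complex.natCast_re, Complex.natCast_im,
      map_sub, map_add, map_smul, map_zero, LinearMap.sub_apply, LinearMap.add_apply,
      LinearMap.smul_apply, LinearMap.zero_apply, smul_eq_mul,
      hv, hvs, hvvs, h2v, hxv, hbv, h_aa_ab, h_abab, h_aax, h_abx, s_abaa,
      s_xaa, s_xab, s_vaa, s_vab, s_vbb, s_vxx, s_vsv, s_vsaa, s_vsab, s_vsbb, s_vsxx,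
      s_bbaa, s_bbab, s_xbb]
    rw [← hsdef, hns]
    field_simp
    try ring
  have hcc : B aa v * B aa v ≠ 0 := mul_ne_zero hc hc
  have hcc2 : 0 < B aa v * B aa v := mul_self_pos.mpr hc
  have hmem : mir B v vs (n:ℝ) ((aa,ab),(bb,xx)) ∈ periodDomain B := by
    refine ⟨?_, ?_, ?_, ?_⟩
    · simp only [Bc, Complex.ext_iff, Complex.zero_re, Complex.zero_im]
      rw [← hM1, ← hM2]
      constructor
      · have h := EA.trans EB.symm
        have := mul_left_cancel₀ hcc h
        linarith
      · rw [EC, ED]; ring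
    · simp only [Bc, conjC, Complex.ext_iff, map_neg]
      rw [← hM1, ← hM2]
      nlinarith only [EA, EB, mul_pos (mul_pos hs0 hs0) hT, hcc2]
    · simp only [Bc, toC, Complex.ext_iff, Complex.zero_re, Complex.zero_im, map_zero]
      rw [← hM1, ← hM2, ← hM3]
      constructor
      · rw [EE]; ring
      · rw [EF]; ring
    · show 0 < B M3 M3
      nlinarith only [EG, mul_pos (mul_pos hs0 hs0) hA, hcc2]
  -- the determinant invariant
  set F : ((V × V) × (V × V)) → ℝ := fun q =>
      B aa q.1.1 * (B ab q.1.2 * B xx q.2.2 - B ab q.2.2 * B xx q.1.2)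
    - B aa q.1.2 * (B ab q.1.1 * B xx q.2.2 - B ab q.2.2 * B xx q.1.1)
    + B aa q.2.2 * (B ab q.1.1 * B xx q.1.2 - B ab q.1.2 * B xx q.1.1) with hFdef
  have cB : ∀ w : V, Continuous fun z : V => B w z := fun w =>
    (B w).continuous_of_finiteDimensional
  have hFc : Continuous F := by
    rw [hFdef]
    have c1 : Continuous fun q : (V × V) × (V × V) => q.1.1 :=
      continuous_fst.comp continuous_fst
    have c2 : Continuous fun q : (V × V) × (V × V) => q.1.2 :=
      continuous_snd.comp continuous_fst
    have c3 : Continuous fun q : (V × V) × (V × V) => q.2.2 :=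
      continuous_snd.comp continuous_snd
    exact ((((cB aa).comp c1).mul ((((cB ab).comp c2).mul ((cB xx).comp c3)).sub
        (((cB ab).comp c3).mul ((cB xx).comp c2)))).sub
      (((cB aa).comp c2).mul ((((cB ab).comp c1).mul ((cB xx).comp c3)).sub
        (((cB ab).comp c3).mul ((cB xx).comp c1))))).add
      (((cB aa).comp c3).mul ((((cB ab).comp c1).mul ((cB xx).comp c2)).sub
        (((cB ab).comp c2).mul ((cB xx).comp c1))))
  have hFp : F ((aa,ab),(bb,xx)) = B aa aa * (B aa aa * B xx xx) := by
    simp only [hFdef]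
    rw [h_aa_ab, h_aax, h_abx, s_abaa, s_xaa, s_xab, h_abab]
    ring
  have hFppos : 0 < F ((aa,ab),(bb,xx)) := by
    rw [hFp]; positivity
  -- nonvanishing of F on the period domain
  have hFne : ∀ q ∈ periodDomain B, F q ≠ 0 := by
    rintro ⟨⟨q1, q2⟩, qb, qx⟩ ⟨hq1, hq2, hq3, hq4⟩ hF0
    simp only [Bc, conjC, toC, Complex.ext_iff, Complex.zero_re, Complex.zero_im, map_zero,
      map_neg, sub_zero, add_zero, zero_add, sub_neg_eq_add] at hq1 hq2 hq3
    have hqT : 0 < B qx qx := hq4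
    have hq21' : B q2 q1 = B q1 q2 := hsymm q2 q1
    have hq12 : B q1 q2 = 0 := by
      have := hq1.2; simp only [hq21'] at this; linarith
    have hq22 : B q2 q2 = B q1 q1 := by linarith [hq1.1]
    have hqA : 0 < B q1 q1 := by linarith only [hq2, hq22]
    have hq1x : B q1 qx = 0 := hq3.1
    have hq2x : B q2 qx = 0 := hq3.2
    have hq21 : B q2 q1 = 0 := by rw [hq21']; exact hq12
    have hqx1 : B qx q1 = 0 := by rw [hsymm]; exact hq1x
    have hqx2 : B qx q2 = 0 := by rw [hsymm]; exact hq2x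
    set M : Matrix (Fin 3) (Fin 3) ℝ :=
      !![B aa q1, B aa q2, B aa qx; B ab q1, B ab q2, B ab qx; B xx q1, B xx q2, B xx qx]
      with hMdef
    have hdet : M.det = 0 := by
      rw [Matrix.det_fin_three]
      simp only [hFdef] at hF0
      simp only [hMdef, Matrix.cons_val', Matrix.cons_val_zero, Matrix.cons_val_one,
        Matrix.head_cons, Matrix.empty_val', Matrix.cons_val_fin_one, Matrix.head_fin_const,
        Matrix.cons_val_two, Matrix.tail_cons, Matrix.of_apply]
      linear_combination hF0
    obtain ⟨cv, hcv0, hcvk⟩ := Matrix.exists_mulVec_eq_zero_iff.mpr hdet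
    have hk0 := congrFun hcvk 0
    have hk1 := congrFun hcvk 1
    have hk2 := congrFun hcvk 2
    simp only [hMdef, Matrix.mulVec, dotProduct, Fin.sum_univ_three,
      Matrix.cons_val', Matrix.cons_val_zero, Matrix.cons_val_one, Matrix.head_cons,
      Matrix.empty_val', Matrix.cons_val_fin_one, Matrix.head_fin_const, Matrix.cons_val_two,
      Matrix.tail_cons, Matrix.of_apply, Pi.zero_apply] at hk0 hk1 hk2
    set uu := cv 0 • q1 + cv 1 • q2 + cv 2 • qx with huu
    have hu1 : B aa uu = 0 := by
      simp only [huu, map_add, map_smul, smul_eq_mul]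
      linarith [hk0]
    have hu2 : B ab uu = 0 := by
      simp only [huu, map_add, map_smul, smul_eq_mul]
      linarith [hk1]
    have hu3 : B xx uu = 0 := by
      simp only [huu, map_add, map_smul, smul_eq_mul]
      linarith [hk2]
    have hsd := neg_semidef B hsymm hsig aa ab xx uu hA hA2 hT h_aa_ab h_aax h_abx hu1 hu2 hu3
    have huuval : B uu uu = cv 0 ^ 2 * B q1 q1 + cv 1 ^ 2 * B q1 q1 + cv 2 ^ 2 * B qx qx := by
      simp only [huu, map_add, map_smul, LinearMap.add_apply, LinearMap.smul_apply,
        smul_eq_mul, hq12, hq21, hq1x, hq2x, hqx1, hqx2, hq22]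
      ring
    have t0 : 0 ≤ cv 0 ^ 2 * B q1 q1 := mul_nonneg (sq_nonneg _) hqA.le
    have t1 : 0 ≤ cv 1 ^ 2 * B q1 q1 := mul_nonneg (sq_nonneg _) hqA.le
    have t2 : 0 ≤ cv 2 ^ 2 * B qx qx := mul_nonneg (sq_nonneg _) hqT.le
    have hz0 : cv 0 = 0 := by
      have h00 : cv 0 ^ 2 * B q1 q1 = 0 := by linarith only [hsd, huuval, t0, t1, t2]
      rcases mul_eq_zero.mp h00 with h | h
      · exact pow_eq_zero_iff (by norm_num : (2:ℕ) ≠ 0) |>.mp h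
      · exact absurd h hqA.ne'
    have hz1 : cv 1 = 0 := by
      have h00 : cv 1 ^ 2 * B q1 q1 = 0 := by linarith only [hsd, huuval, t0, t1, t2]
      rcases mul_eq_zero.mp h00 with h | h
      · exact pow_eq_zero_iff (by norm_num : (2:ℕ) ≠ 0) |>.mp h
      · exact absurd h hqA.ne'
    have hz2 : cv 2 = 0 := by
      have h00 : cv 2 ^ 2 * B qx qx = 0 := by linarith only [hsd, huuval, t0, t1, t2]
      rcases mul_eq_zero.mp h00 with h | h
      · exact pow_eq_zero_iff (by norm_num : (2:ℕ) ≠ 0) |>.mp h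
      · exact absurd h hqT.ne'
    apply hcv0
    funext j
    fin_cases j <;> simp only [Pi.zero_apply] <;> first | exact hz0 | exact hz1 | exact hz2
  -- value of F at the mirror point
  have vm23 : B ab M3 = s * B aa aa / B aa v := by
    rw [eq_div_iff hc]; linear_combination R23
  have vm32 : B xx M2 = s * B xx xx / B aa v := by
    rw [eq_div_iff hc]; linear_combination R32
  have vm12 : B aa M2 = -(B aa v * B xx M1) / s := by
    rw [eq_div_iff hs0.ne']; linear_combination R12
  have vm13 : B aa M3 = -(B aa v * B ab M1) / s := by
    rw [eq_div_iff hs0.ne']; linear_combination R13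
  have hFmp : F (mir B v vs (n:ℝ) ((aa,ab),(bb,xx))) =
      - (B aa M1 * (B ab M3 * B xx M2)) + B aa M2 * (B ab M3 * B xx M1)
        + B aa M3 * (B ab M1 * B xx M2) := by
    simp only [hFdef]
    rw [← hM1, ← hM2, ← hM3, R22, R33]
    ring
  have hdetval : B aa v * B aa v * F (mir B v vs (n:ℝ) ((aa,ab),(bb,xx))) =
      -((s*s) * B aa aa * B xx xx * B aa M1)
        - (B aa v)^2 * (B aa aa * (B xx M1)^2 + B xx xx * (B ab M1)^2) := by
    rw [hFmp, vm23, vm32, vm12, vm13]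
    field_simp
    ring
  -- the projection inequality at an auxiliary vector
  set uV := ((B aa v)^3) • M1 + ((s*s) * B aa aa - (B aa v)^2 * B aa M1) • v with huV
  have s_vM1 : B v M1 = B M1 v := hsymm v M1
  have hu1 : B aa uV = B aa v * ((s*s) * B aa aa) := by
    simp only [huV, map_add, map_smul, smul_eq_mul]
    ring
  have hu2 : B ab uV = (B aa v)^3 * B ab M1 := by
    simp only [huV, map_add, map_smul, smul_eq_mul, h2v]
    ring
  have hu3 : B xx uV = (B aa v)^3 * B xx M1 := by
    simp only [huV, map_add, map_smul, smul_eq_mul, hxv]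
    ring
  have huu_raw : B uV uV = (B aa v)^6 * B M1 M1
      + 2*(B aa v)^3*((s*s) * B aa aa - (B aa v)^2 * B aa M1)*B M1 v := by
    simp only [huV, map_add, map_smul, LinearMap.add_apply, LinearMap.smul_apply,
      smul_eq_mul, hv, s_vM1]
    ring
  have huu2 : B uV uV = (B aa v)^4 * ((s*s) * B xx xx)
      + 2*(B aa v)^2*((s*s) * B aa aa - (B aa v)^2 * B aa M1)*(s*s) := by
    linear_combination huu_raw + (B aa v)^4 * EA
      + 2*(B aa v)^2*((s*s) * B aa aa - (B aa v)^2 * B aa M1) * EH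
  have HP := proj_ineq B hsymm hsig aa ab xx uV hA hA2 hT h_aa_ab h_aax h_abx
  rw [h_abab, hu1, hu2, hu3, huu2] at HP
  have h7 : 2 * B aa aa * (B aa v)^6 * F (mir B v vs (n:ℝ) ((aa,ab),(bb,xx))) =
      2 * B aa aa * (B aa v)^4 *
        (-((s*s) * B aa aa * B xx xx * B aa M1)
          - (B aa v)^2 * (B aa aa * (B xx M1)^2 + B xx xx * (B ab M1)^2)) := by
    linear_combination (2 * B aa aa * (B aa v)^4) * hdetval
  have hP1 : 0 < B aa aa^2 * B xx xx^2 * (B aa v)^4 * s^2 := by positivity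
  have hP2 : 0 < B aa aa^3 * B xx xx * s^4 * (B aa v)^2 := by positivity
  have hP3 : 0 ≤ B aa aa * B xx xx * (B aa v)^6 * (B ab M1)^2 := by positivity
  have hP4 : 0 ≤ B aa aa^2 * (B aa v)^6 * (B xx M1)^2 := by positivity
  have h6 : 0 < B aa aa * (B aa v)^6 := by positivity
  have hneg6 : 2 * B aa aa * (B aa v)^6 * F (mir B v vs (n:ℝ) ((aa,ab),(bb,xx))) < 0 := by
    linarith only [HP, h7, hP1, hP2, hP3, hP4]
  have hFmpneg : F (mir B v vs (n:ℝ) ((aa,ab),(bb,xx))) < 0 := by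
    by_contra hge
    push_neg at hge
    linarith only [mul_nonneg (by positivity : (0:ℝ) ≤ 2 * B aa aa * (B aa v)^6) hge, hneg6]
  refine ⟨hmem, ?_⟩
  intro heq
  have h1 : (((aa,ab),(bb,xx)) : (V × V) × (V × V)) ∈
      connectedComponentIn (periodDomain B) ((aa,ab),(bb,xx)) := mem_connectedComponentIn hpmem
  have h2 : mir B v vs (n:ℝ) ((aa,ab),(bb,xx)) ∈
      connectedComponentIn (periodDomain B) ((aa,ab),(bb,xx)) := by
    rw [heq]
    exact mem_connectedComponentIn hmem
  obtain ⟨q, hqS, hq0⟩ := isPreconnected_connectedComponentIn.intermediate_value₂ h2 h1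
    hFc.continuousOn continuousOn_const hFmpneg.le hFppos.le
  exact hFne q (connectedComponentIn_subset _ _ hqS) hq0
end
end

section
/- Suppose (α, β + ix) ∈ Dom(m)^𝒢 satisfies: (1) there is no D ∈ 𝒲 with α·D = 0 and x·D = 0; (2) x² is irrational; and (3) for each D ∈ 𝒲, at least one of the following two implications holds: [if pr(Re α)·D ≠ 0 then pr(β)·D ≠ 0], or [if α·D ≠ 0 then (Im α)·D ≠ 0]. Then there exists an uncountable subset Π ⊆ ℝ∖{0} which is dense in ℝ such that for every λ ∈ Π, the point (α, λβ + ix) lies in Dom(m)^𝒢 and, writing m(α, λβ + ix) = (α∨_λ, β∨_λ + i x∨_λ), there is no D ∈ 𝒲 with α∨_λ·D = 0 and x∨_λ·D = 0. -/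
/- Context: `V` is a finite-dimensional real vector space with a nondegenerate symmetric
bilinear form `B` of signature `(3, dim V − 3)`.  We model the complexification `V_ℂ`
by pairs `(a, b) : V × V` representing `a + i·b`. -/

noncomputable section

open Polynomial in
lemma quadFinite (a b c : ℝ) (h : ¬(a = 0 ∧ b = 0 ∧ c = 0)) :
    {l : ℝ | a * l ^ 2 + b * l + c = 0}.Finite := by
  have hp : (C a * X ^ 2 + C b * X + C c : ℝ[X]) ≠ 0 := by
    intro h0
    refine h ⟨?_, ?_, ?_⟩
    · simpa using congrArg (fun q => Polynomial.coeff q 2) h0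
    · simpa using congrArg (fun q => Polynomial.coeff q 1) h0
    · simpa using congrArg (fun q => Polynomial.coeff q 0) h0
  refine (Polynomial.finite_setOf_isRoot hp).subset ?_
  intro l hl
  simp only [Set.mem_setOf_eq] at hl ⊢
  simp only [Polynomial.IsRoot, Polynomial.eval_add, Polynomial.eval_mul, Polynomial.eval_pow, Polynomial.eval_C, Polynomial.eval_X]
  linarith

lemma mirf1 {V : Type*} [AddCommGroup V] [Module ℝ V] (B : LinearMap.BilinForm ℝ V)
    (v vs : V) (n : ℝ) (p : (V × V) × (V × V)) (l : ℝ) (D : V) :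
    B (mir B v vs n (p.1, (l • p.2.1, p.2.2))).1.1 D =
      (B p.1.1 v)⁻¹ * (-(B p.2.1 p.2.1 / 2 * B v D) * l ^ 2 +
        (Real.sqrt n * B (prR B v vs n p.2.1) D) * l +
        (B p.2.2 p.2.2 / 2 * B v D + B vs D)) := by
  simp only [mir, prC, prR, Bc, cSMul, toC, Prod.fst_sub, Prod.fst_add, Prod.smul_fst,
    Prod.snd_sub, Prod.snd_add, Prod.smul_snd, Complex.div_ofReal_re, Complex.div_ofReal_im,
    Complex.div_ofNat_re, Complex.div_ofNat_im, map_add, map_sub, map_smul, map_zero,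
    LinearMap.add_apply, LinearMap.sub_apply, LinearMap.smul_apply, smul_eq_mul,
    LinearMap.map_smul, LinearMap.zero_apply]
  ring

lemma mirf2 {V : Type*} [AddCommGroup V] [Module ℝ V] (B : LinearMap.BilinForm ℝ V)
    (v vs : V) (n : ℝ) (p : (V × V) × (V × V)) (l : ℝ) (D : V) :
    B (mir B v vs n (p.1, (l • p.2.1, p.2.2))).1.2 D =
      (B p.1.1 v)⁻¹ * (-((B p.2.1 p.2.2 + B p.2.2 p.2.1) / 2 * B v D) * l +
        Real.sqrt n * B (prR B v vs n p.2.2) D) := by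
  simp only [mir, prC, prR, Bc, cSMul, toC, Prod.fst_sub, Prod.fst_add, Prod.smul_fst,
    Prod.snd_sub, Prod.snd_add, Prod.smul_snd, Complex.div_ofReal_re, Complex.div_ofReal_im,
    Complex.div_ofNat_re, Complex.div_ofNat_im, map_add, map_sub, map_smul, map_zero,
    LinearMap.add_apply, LinearMap.sub_apply, LinearMap.smul_apply, smul_eq_mul,
    LinearMap.map_smul, LinearMap.zero_apply]
  ring

lemma mirf3 {V : Type*} [AddCommGroup V] [Module ℝ V] (B : LinearMap.BilinForm ℝ V)
    (v vs : V) (n : ℝ) (p : (V × V) × (V × V)) (l : ℝ) (D : V) :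
    B (mir B v vs n (p.1, (l • p.2.1, p.2.2))).2.2 D =
      (B p.1.1 v)⁻¹ * (-(B p.1.2 p.2.1 * B v D) * l +
        Real.sqrt n * B (prR B v vs n p.1.2) D) := by
  simp only [mir, prC, prR, Bc, cSMul, toC, Prod.fst_sub, Prod.fst_add, Prod.smul_fst,
    Prod.snd_sub, Prod.snd_add, Prod.smul_snd, Complex.div_ofReal_re, Complex.div_ofReal_im,
    Complex.div_ofNat_re, Complex.div_ofNat_im, map_add, map_sub, map_smul, map_zero,
    LinearMap.add_apply, LinearMap.sub_apply, LinearMap.smul_apply, smul_eq_mul,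
    LinearMap.map_smul, LinearMap.zero_apply]
  ring

lemma prR_apply {V : Type*} [AddCommGroup V] [Module ℝ V] (B : LinearMap.BilinForm ℝ V)
    (v vs : V) (n : ℝ) (z D : V) :
    B (prR B v vs n z) D = B z D - B z vs / n * B v D - B z v / n * B vs D := by
  simp [prR, map_sub, map_smul, LinearMap.sub_apply, LinearMap.smul_apply, smul_eq_mul]


/-- (Lattice context: `Λ ⊆ V` is a full lattice of rank `≥ 5` on which the
form is integral, `Λ = ℤv ⊕ ℤv* ⊕ (Λ ∩ {v,v*}^⊥)` with `v² = (v*)² = 0`, `v·v* = n > 0`, and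
`𝒲 ⊆ Λ` is a set of primitive vectors of negative square.)
Suppose `(α, β + ix) ∈ Dom(m)^𝒢` satisfies: (1) no `D ∈ 𝒲` has `α·D = 0` and `x·D = 0`;
(2) `x²` is irrational; (3) for each `D ∈ 𝒲`, either `pr(Re α)·D ≠ 0 → pr(β)·D ≠ 0` or
`α·D ≠ 0 → Im α·D ≠ 0`.  Then there is an uncountable dense set `Π ⊆ ℝ∖{0}` such that for
every `λ ∈ Π` the point `(α, λβ + ix)` lies in `Dom(m)^𝒢` and, writing
`m(α, λβ + ix) = (α∨_λ, β∨_λ + i x∨_λ)`, no `D ∈ 𝒲` has `α∨_λ·D = 0` and `x∨_λ·D = 0`. -/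
theorem statement10 {V : Type*} [NormedAddCommGroup V] [NormedSpace ℝ V] [FiniteDimensional ℝ V]
    (B : LinearMap.BilinForm ℝ V)
    (hsymm : ∀ x y : V, B x y = B y x)
    (hnd : ∀ x : V, (∀ y : V, B x y = 0) → x = 0)
    (hsig : IsSigThree B)
    (Λ : Submodule ℤ V) (hspan : Submodule.span ℝ (Λ : Set V) = ⊤) (hfg : Λ.FG)
    (hrank : 5 ≤ Module.finrank ℝ V)
    (hint : ∀ x ∈ Λ, ∀ y ∈ Λ, ∃ k : ℤ, B x y = (k : ℝ))
    (n : ℕ) (hn : 0 < n) (v vs : V) (hvΛ : v ∈ Λ) (hvsΛ : vs ∈ Λ)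
    (hv : B v v = 0) (hvs : B vs vs = 0) (hvvs : B v vs = (n : ℝ))
    (hdec : ∀ l ∈ Λ, ∃ a b : ℤ,
      l - a • v - b • vs ∈ Λ ∧ B (l - a • v - b • vs) v = 0 ∧ B (l - a • v - b • vs) vs = 0)
    (𝒲 : Set V) (h𝒲Λ : 𝒲 ⊆ (Λ : Set V)) (h𝒲neg : ∀ D ∈ 𝒲, B D D < 0)
    (h𝒲prim : ∀ D ∈ 𝒲, ∀ l ∈ Λ, ∀ k : ℤ, 2 ≤ k.natAbs → (k : ℝ) • l ≠ D)
    (p : (V × V) × (V × V)) (hp : p ∈ domM B v)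
    (h1 : ¬ ∃ D ∈ 𝒲, Bc B p.1 (toC D) = 0 ∧ B p.2.2 D = 0)
    (h2 : Irrational (B p.2.2 p.2.2))
    (h3 : ∀ D ∈ 𝒲,
      (B (prR B v vs n p.1.1) D ≠ 0 → B (prR B v vs n p.2.1) D ≠ 0) ∨
      (Bc B p.1 (toC D) ≠ 0 → B p.1.2 D ≠ 0)) :
    ∃ Pi : Set ℝ, (∀ l ∈ Pi, l ≠ 0) ∧ ¬ Pi.Countable ∧ Dense Pi ∧
      ∀ l ∈ Pi, (p.1, (l • p.2.1, p.2.2)) ∈ domM B v ∧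
        ¬ ∃ D ∈ 𝒲,
          Bc B (mir B v vs n (p.1, (l • p.2.1, p.2.2))).1 (toC D) = 0 ∧
          B (mir B v vs n (p.1, (l • p.2.1, p.2.2))).2.2 D = 0 := by
  obtain ⟨hpPD, hImv, hRev, hxv, hβv⟩ := hp
  have hn' : (0:ℝ) < n := by exact_mod_cast hn
  have hs : Real.sqrt n ≠ 0 := by positivity
  have hrinv : (B p.1.1 v)⁻¹ ≠ 0 := inv_ne_zero hRev
  -- countability of the lattice
  have hΛc : (Λ : Set V).Countable := by
    obtain ⟨k, f, hf⟩ := Submodule.fg_iff_exists_fin_generating_family.mp hfg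
    have hsub : (Λ : Set V) ⊆ Set.range (fun c : Fin k → ℤ => ∑ i, c i • f i) := by
      intro z hz
      rw [← hf] at hz
      obtain ⟨c, hc⟩ := Submodule.mem_span_range_iff_exists_fun ℤ |>.mp hz
      exact ⟨c, hc⟩
    exact (Set.countable_range _).mono hsub
  have h𝒲c : 𝒲.Countable := hΛc.mono h𝒲Λ
  -- per-wall bad set is finite
  set bad : V → Set ℝ := fun D =>
    {l : ℝ | Bc B (mir B v vs n (p.1, (l • p.2.1, p.2.2))).1 (toC D) = 0 ∧
      B (mir B v vs n (p.1, (l • p.2.1, p.2.2))).2.2 D = 0} with hbaddef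
  have hbadf : ∀ D ∈ 𝒲, (bad D).Finite := by
    intro D hD
    -- the three coordinate functions expressed as polynomials in l
    have hf1 : ∀ l : ℝ, l ∈ bad D →
        -(B p.2.1 p.2.1 / 2 * B v D) * l ^ 2 +
          Real.sqrt n * B (prR B v vs n p.2.1) D * l +
          (B p.2.2 p.2.2 / 2 * B v D + B vs D) = 0 := by
      intro l hl
      have h := congrArg Complex.re hl.1
      simp only [Bc, toC, map_zero, Complex.zero_re, sub_zero] at h
      rw [mirf1 B v vs n p l D] at h
      rcases mul_eq_zero.mp h with h | h
      · exact absurd h hrinv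
      · exact h
    have hf2 : ∀ l : ℝ, l ∈ bad D →
        -((B p.2.1 p.2.2 + B p.2.2 p.2.1) / 2 * B v D) * l +
          Real.sqrt n * B (prR B v vs n p.2.2) D = 0 := by
      intro l hl
      have h := congrArg Complex.im hl.1
      simp only [Bc, toC, map_zero, Complex.zero_im, zero_add] at h
      rw [mirf2 B v vs n p l D] at h
      rcases mul_eq_zero.mp h with h | h
      · exact absurd h hrinv
      · exact h
    have hf3 : ∀ l : ℝ, l ∈ bad D →
        -(B p.1.2 p.2.1 * B v D) * l + Real.sqrt n * B (prR B v vs n p.1.2) D = 0 := by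
      intro l hl
      have h := hl.2
      rw [mirf3 B v vs n p l D] at h
      rcases mul_eq_zero.mp h with h | h
      · exact absurd h hrinv
      · exact h
    by_cases hA : -(B p.2.1 p.2.1 / 2 * B v D) = 0 ∧
        Real.sqrt n * B (prR B v vs n p.2.1) D = 0 ∧
        B p.2.2 p.2.2 / 2 * B v D + B vs D = 0
    · by_cases hB : -((B p.2.1 p.2.2 + B p.2.2 p.2.1) / 2 * B v D) = 0 ∧
          Real.sqrt n * B (prR B v vs n p.2.2) D = 0
      · by_cases hC : -(B p.1.2 p.2.1 * B v D) = 0 ∧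
            Real.sqrt n * B (prR B v vs n p.1.2) D = 0
        · -- all coefficients vanish: contradiction
          exfalso
          obtain ⟨k, hk⟩ := hint v hvΛ D (h𝒲Λ hD)
          obtain ⟨m, hm⟩ := hint vs hvsΛ D (h𝒲Λ hD)
          have hvD : B v D = 0 := by
            rcases eq_or_ne (k : ℝ) 0 with h | h
            · rw [hk, h]
            · exfalso
              apply h2
              refine ⟨(-2 * m / k : ℚ), ?_⟩
              have hc := hA.2.2
              rw [hk, hm] at hc
              have hk0 : (k : ℚ) ≠ 0 := by exact_mod_cast (by exact_mod_cast h : (k:ℚ) ≠ 0)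
              push_cast
              field_simp
              push_cast at hc ⊢
              nlinarith [hc]
          have hvsD : B vs D = 0 := by
            have hc := hA.2.2
            rw [hvD] at hc
            simpa using hc
          have hβD : B p.2.1 D = 0 := by
            have := hA.2.1
            rcases mul_eq_zero.mp this with h | h
            · exact absurd h hs
            · rw [prR_apply, hvD, hvsD] at h; simpa using h
          have hxD : B p.2.2 D = 0 := by
            rcases mul_eq_zero.mp hB.2 with h | h
            · exact absurd h hs
            · rw [prR_apply, hvD, hvsD] at h; simpa using h
          have hImD : B p.1.2 D = 0 := by
            rcases mul_eq_zero.mp hC.2 with h | h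
            · exact absurd h hs
            · rw [prR_apply, hvD, hvsD] at h; simpa using h
          have hαD : Bc B p.1 (toC D) ≠ 0 := fun hh => h1 ⟨D, hD, hh, hxD⟩
          have hReD : B p.1.1 D ≠ 0 := by
            intro hh
            exact hαD (by simp [Bc, toC, Complex.ext_iff, hh, hImD])
          rcases h3 D hD with himp | himp
          · have : B (prR B v vs n p.1.1) D ≠ 0 := by
              rw [prR_apply, hvD, hvsD]; simpa using hReD
            have := himp this
            rw [prR_apply, hvD, hvsD] at this
            simp [hβD] at this
          · exact himp hαD hImD
        · -- f3 is a nonzero linear polynomial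
          refine (quadFinite 0 (-(B p.1.2 p.2.1 * B v D))
            (Real.sqrt n * B (prR B v vs n p.1.2) D) ?_).subset ?_
          · intro h; exact hC ⟨h.2.1, h.2.2⟩
          · intro l hl
            have := hf3 l hl
            simp only [Set.mem_setOf_eq]
            linarith [this]
      · refine (quadFinite 0 (-((B p.2.1 p.2.2 + B p.2.2 p.2.1) / 2 * B v D))
          (Real.sqrt n * B (prR B v vs n p.2.2) D) ?_).subset ?_
        · intro h; exact hB ⟨h.2.1, h.2.2⟩
        · intro l hl
          have := hf2 l hl
          simp only [Set.mem_setOf_eq]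
          linarith [this]
    · refine (quadFinite _ _ _ hA).subset ?_
      intro l hl
      exact hf1 l hl
  -- assemble
  set S : Set ℝ := insert (0:ℝ) (⋃ D ∈ 𝒲, bad D) with hSdef
  have hSc : S.Countable :=
    ((h𝒲c.biUnion (fun D hD => (hbadf D hD).countable)).insert 0)
  refine ⟨Sᶜ, ?_, ?_, ?_, ?_⟩
  · intro l hl h0
    exact hl (by simp [hSdef, h0])
  · intro hc
    have : (Set.univ : Set ℝ).Countable := by
      have := hc.union hSc
      rwa [Set.compl_union_self] at this
    exact Cardinal.not_countable_real this
  · exact hSc.dense_compl ℝ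
  · intro l hl
    refine ⟨⟨hpPD, hImv, hRev, hxv, ?_⟩, ?_⟩
    · have : B (l • p.2.1) v = l * B p.2.1 v := by
        simp [map_smul]
      rw [this, hβv, mul_zero]
    · rintro ⟨D, hD, hcond⟩
      exact hl (Set.mem_insert_iff.mpr (Or.inr (Set.mem_biUnion hD ⟨hcond.1, hcond.2⟩)))
end
end
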